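/- arXiv:2001.01418 — 7 statements merged into one kernel-verified Lean document; each statement's English description precedes it below -/
import Mathlib

section
/- Let S = K[x_1,…,x_s], R = K[y_1,…,y_r], m and n their graded maximal ideals, I ⊆ m^2 and J ⊆ n^2 graded ideals, H = I + mn in T = S ⊗_K R, and F = I + J + mn. Then for every positive integer k, F^k = H^k + Σ_{i=1}^{k} (mn)^{k-i} J^i. -/
open MvPolynomial TensorProduct



section Abstract
variable {R : Type*} [CommRing R] (A B M : Ideal R)

/-- Any term `M^(n-j) B^j` with `j ≤ n` lies in `H^n + ∑_{i=1}^n M^(n-i) B^i` when `M ≤ H`. -/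
lemma aux_term (H : Ideal R) (hMH : M ≤ H) (n j : ℕ) (hj : j ≤ n) :
    M ^ (n - j) * B ^ j ≤ H ^ n + ∑ i ∈ Finset.Icc 1 n, M ^ (n - i) * B ^ i := by
  rcases Nat.eq_zero_or_pos j with h | h
  · subst h
    simpa using le_trans (pow_le_pow_left' hMH n) le_sup_left
  · exact le_trans
      (Finset.single_le_sum (f := fun i => M ^ (n - i) * B ^ i) (fun i _ => zero_le)
        (Finset.mem_Icc.mpr ⟨h, hj⟩)) le_sup_right

/-- `(A+M)^k * B ≤ (A+M)^(k+1) + M^k * B` given `A*B ≤ M^2`. -/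
lemma aux_push (hAB : A * B ≤ M ^ 2) : ∀ k : ℕ, (A + M) ^ k * B ≤ (A + M) ^ (k + 1) + M ^ k * B := by
  intro k
  induction k with
  | zero => simpa using le_sup_right
  | succ k ih =>
    have h1 : (A + M) ^ (k + 1) * B = (A + M) ^ k * ((A + M) * B) := by ring
    have h2 : (A + M) * B ≤ M ^ 2 + M * B := by
      rw [add_mul]
      exact sup_le (le_trans hAB le_sup_left) (le_trans le_rfl le_sup_right)
    calc (A + M) ^ (k + 1) * B = (A + M) ^ k * ((A + M) * B) := h1
      _ ≤ (A + M) ^ k * (M ^ 2 + M * B) := Ideal.mul_mono_right h2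
      _ = M ^ 2 * (A + M) ^ k + M * ((A + M) ^ k * B) := by ring
      _ ≤ (A + M) ^ (k + 2) + M * ((A + M) ^ (k + 1) + M ^ k * B) := by
          refine sup_le_sup ?_ (Ideal.mul_mono_right ih)
          calc M ^ 2 * (A + M) ^ k ≤ (A + M) ^ 2 * (A + M) ^ k :=
                Ideal.mul_mono_left (pow_le_pow_left' le_sup_right 2)
            _ = (A + M) ^ (k + 2) := by ring
      _ = (A + M) ^ (k + 2) + (M * (A + M) ^ (k + 1) + M ^ (k + 1) * B) := by ring
      _ ≤ (A + M) ^ (k + 2) + M ^ (k + 1) * B := by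
          refine sup_le le_sup_left (sup_le (le_trans ?_ le_sup_left) le_sup_right)
          calc M * (A + M) ^ (k + 1) ≤ (A + M) * (A + M) ^ (k + 1) :=
                Ideal.mul_mono_left le_sup_right
            _ = (A + M) ^ (k + 2) := by ring
end Abstract

section Abstract2
variable {R : Type*} [CommRing R] (A B M : Ideal R)

lemma sum_le_of_forall {ι : Type*} (s : Finset ι) (f : ι → Ideal R) (X : Ideal R)
    (h : ∀ i ∈ s, f i ≤ X) : ∑ i ∈ s, f i ≤ X := by
  classical
  induction s using Finset.induction_on with
  | empty => simp
  | insert a t hx ih =>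
    rw [Finset.sum_insert hx]
    exact sup_le (h _ (Finset.mem_insert_self _ _))
      (ih fun i hi => h i (Finset.mem_insert_of_mem hi))

lemma aux_ge (k : ℕ) :
    (A + M) ^ k + ∑ i ∈ Finset.Icc 1 k, M ^ (k - i) * B ^ i ≤ (A + B + M) ^ k := by
  have hHF : A + M ≤ A + B + M := sup_le (le_sup_left.trans le_sup_left) le_sup_right
  have hMF : M ≤ A + B + M := le_sup_right
  have hBF : B ≤ A + B + M := (le_sup_right.trans le_sup_left : B ≤ A + B + M)
  refine sup_le (pow_le_pow_left' hHF k) (sum_le_of_forall _ _ _ fun i hi => ?_)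
  obtain ⟨h1, h2⟩ := Finset.mem_Icc.mp hi
  calc M ^ (k - i) * B ^ i ≤ (A + B + M) ^ (k - i) * (A + B + M) ^ i :=
        Ideal.mul_mono (pow_le_pow_left' hMF _) (pow_le_pow_left' hBF _)
    _ = (A + B + M) ^ k := by rw [← pow_add]; congr 1; omega

lemma aux_le (hAB : A * B ≤ M ^ 2) :
    ∀ k : ℕ, 1 ≤ k →
      (A + B + M) ^ k ≤ (A + M) ^ k + ∑ i ∈ Finset.Icc 1 k, M ^ (k - i) * B ^ i := by
  have hMH : M ≤ A + M := le_sup_right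
  intro k hk
  induction k, hk using Nat.le_induction with
  | base =>
    simp only [pow_one, Finset.Icc_self, Finset.sum_singleton, Nat.sub_self, pow_zero, one_mul]
    exact le_of_eq (by ring)
  | succ k hk ih =>
    have hF : A + B + M = (A + M) + B := by ring
    calc (A + B + M) ^ (k + 1) = (A + B + M) ^ k * ((A + M) + B) := by rw [← hF]; ring
      _ ≤ ((A + M) ^ k + ∑ i ∈ Finset.Icc 1 k, M ^ (k - i) * B ^ i) * ((A + M) + B) :=
          Ideal.mul_mono_left ih
      _ = (A + M) ^ k * (A + M) + (A + M) ^ k * B +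
            ((∑ i ∈ Finset.Icc 1 k, M ^ (k - i) * B ^ i) * (A + M) +
              (∑ i ∈ Finset.Icc 1 k, M ^ (k - i) * B ^ i) * B) := by ring
      _ ≤ (A + M) ^ (k + 1) +
            ∑ i ∈ Finset.Icc 1 (k + 1), M ^ (k + 1 - i) * B ^ i := by
        refine sup_le (sup_le ?_ ?_) (sup_le ?_ ?_)
        · exact le_trans (le_of_eq (by ring)) le_sup_left
        · refine le_trans (aux_push A B M hAB k) (sup_le le_sup_left ?_)
          have := aux_term B M (A + M) hMH (k + 1) 1 (by omega)
          simpa using this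
        · rw [Finset.sum_mul]
          refine sum_le_of_forall _ _ _ fun i hi => ?_
          obtain ⟨h1, h2⟩ := Finset.mem_Icc.mp hi
          have hBi : B ^ i = B ^ (i - 1) * B := by
            rw [← pow_succ]; congr 1; omega
          rw [mul_add]
          refine sup_le ?_ ?_
          · calc M ^ (k - i) * B ^ i * A = (M ^ (k - i) * B ^ (i - 1)) * (A * B) := by
                  rw [hBi]; ring
              _ ≤ (M ^ (k - i) * B ^ (i - 1)) * M ^ 2 := Ideal.mul_mono_right hAB
              _ = M ^ (k + 1 - (i - 1)) * B ^ (i - 1) := by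
                  rw [show k + 1 - (i - 1) = (k - i) + 2 by omega]; ring
              _ ≤ _ := aux_term B M (A + M) hMH (k + 1) (i - 1) (by omega)
          · calc M ^ (k - i) * B ^ i * M = M ^ (k + 1 - i) * B ^ i := by
                  rw [show k + 1 - i = (k - i) + 1 by omega]; ring
              _ ≤ _ := aux_term B M (A + M) hMH (k + 1) i (by omega)
        · rw [Finset.sum_mul]
          refine sum_le_of_forall _ _ _ fun i hi => ?_
          obtain ⟨h1, h2⟩ := Finset.mem_Icc.mp hi
          calc M ^ (k - i) * B ^ i * B = M ^ (k + 1 - (i + 1)) * B ^ (i + 1) := by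
                rw [show k + 1 - (i + 1) = k - i by omega]; ring
            _ ≤ _ := aux_term B M (A + M) hMH (k + 1) (i + 1) (by omega)

lemma aux_main (hAB : A * B ≤ M ^ 2) (k : ℕ) (hk : 1 ≤ k) :
    (A + B + M) ^ k = (A + M) ^ k + ∑ i ∈ Finset.Icc 1 k, M ^ (k - i) * B ^ i :=
  le_antisymm (aux_le A B M hAB k hk) (aux_ge A B M k)
end Abstract2

noncomputable section

variable (K : Type) [Field K] (s r : ℕ)

/-- The extension of an ideal of `S` to `T = S ⊗_K R`. -/
def extIdealLeft (I : Ideal (MvPolynomial (Fin s) K)) :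
    Ideal (MvPolynomial (Fin s) K ⊗[K] MvPolynomial (Fin r) K) :=
  Ideal.map
    (Algebra.TensorProduct.includeLeft :
      MvPolynomial (Fin s) K →ₐ[K] MvPolynomial (Fin s) K ⊗[K] MvPolynomial (Fin r) K) I

/-- The extension of an ideal of `R` to `T = S ⊗_K R`. -/
def extIdealRight (J : Ideal (MvPolynomial (Fin r) K)) :
    Ideal (MvPolynomial (Fin s) K ⊗[K] MvPolynomial (Fin r) K) :=
  Ideal.map
    (Algebra.TensorProduct.includeRight :
      MvPolynomial (Fin r) K →ₐ[K] MvPolynomial (Fin s) K ⊗[K] MvPolynomial (Fin r) K) J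

/-- The graded maximal ideal `(x₁,…,x_s)` of a polynomial ring. -/
def maxGradedIdeal (N : ℕ) : Ideal (MvPolynomial (Fin N) K) :=
  Ideal.span (Set.range (X : Fin N → MvPolynomial (Fin N) K))

/-- Let `S = K[x₁,…,x_s]`, `R = K[y₁,…,y_r]`, `m`, `n` their graded maximal
ideals, `I ⊆ m²` and `J ⊆ n²` graded ideals, `H = I + mn` in `T = S ⊗_K R`, and
`F = I + J + mn`. Then for every positive integer `k`,
`F^k = H^k + ∑_{i=1}^{k} (mn)^{k-i} J^i`. -/
theorem fiberProduct_power_decomposition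
    (I : Ideal (MvPolynomial (Fin s) K)) (J : Ideal (MvPolynomial (Fin r) K))
    (hIhom : ∀ f ∈ I, ∀ d : ℕ, MvPolynomial.homogeneousComponent d f ∈ I)
    (hJhom : ∀ f ∈ J, ∀ d : ℕ, MvPolynomial.homogeneousComponent d f ∈ J)
    (hI : I ≤ (maxGradedIdeal K s) ^ 2) (hJ : J ≤ (maxGradedIdeal K r) ^ 2)
    (k : ℕ) (hk : 1 ≤ k) :
    (extIdealLeft K s r I + extIdealRight K s r J +
        extIdealLeft K s r (maxGradedIdeal K s) * extIdealRight K s r (maxGradedIdeal K r)) ^ k =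
      (extIdealLeft K s r I +
          extIdealLeft K s r (maxGradedIdeal K s) * extIdealRight K s r (maxGradedIdeal K r)) ^ k +
        ∑ i ∈ Finset.Icc 1 k,
          (extIdealLeft K s r (maxGradedIdeal K s) *
              extIdealRight K s r (maxGradedIdeal K r)) ^ (k - i) *
            (extIdealRight K s r J) ^ i := by
  have h1 : extIdealLeft K s r I ≤ (extIdealLeft K s r (maxGradedIdeal K s)) ^ 2 := by
    have := Ideal.map_mono (f := (Algebra.TensorProduct.includeLeft :
      MvPolynomial (Fin s) K →ₐ[K] MvPolynomial (Fin s) K ⊗[K] MvPolynomial (Fin r) K)) hI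
    rwa [Ideal.map_pow] at this
  have h2 : extIdealRight K s r J ≤ (extIdealRight K s r (maxGradedIdeal K r)) ^ 2 := by
    have := Ideal.map_mono (f := (Algebra.TensorProduct.includeRight :
      MvPolynomial (Fin r) K →ₐ[K] MvPolynomial (Fin s) K ⊗[K] MvPolynomial (Fin r) K)) hJ
    rwa [Ideal.map_pow] at this
  have hAB : extIdealLeft K s r I * extIdealRight K s r J ≤
      (extIdealLeft K s r (maxGradedIdeal K s) * extIdealRight K s r (maxGradedIdeal K r)) ^ 2 :=
    le_trans (Ideal.mul_mono h1 h2) (le_of_eq (by ring))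
  exact aux_main _ _ _ hAB k hk

end
end

section
/- With S, R, m, n, I ⊆ m^2, J ⊆ n^2, H = I + mn and F = I + J + mn as above, set G_0 = H^k and G_t = H^k + Σ_{i=1}^{t} (mn)^{k-i} J^i for 1 ≤ t ≤ k. Then for each 1 ≤ t ≤ k one has the intersection formula G_{t-1} ∩ (mn)^{k-t} J^t = m^{k-t+1} n^{k-t} J^t. -/
set_option maxHeartbeats 1000000

open MvPolynomial TensorProduct

noncomputable section

section AuxPoly

variable {R : Type*} [CommRing R] {σ : Type*}

/-- The ideal of polynomials all of whose coefficients in (total) degree `< e` vanish. -/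
def lowVanish (e : ℕ) : Ideal (MvPolynomial σ R) where
  carrier := {p | ∀ d : σ →₀ ℕ, (d.sum fun _ n => n) < e → coeff d p = 0}
  add_mem' := by intro p q hp hq d hd; simp [coeff_add, hp d hd, hq d hd]
  zero_mem' := by intro d hd; simp
  smul_mem' := by
    classical
    intro q p hp d hd
    rw [smul_eq_mul, coeff_mul]
    apply Finset.sum_eq_zero
    rintro ⟨u, v⟩ huv
    have huv' : u + v = d := Finset.HasAntidiagonal.mem_antidiagonal.mp huv
    have hv : (v.sum fun _ n => n) ≤ (d.sum fun _ n => n) := by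
      rw [← huv', Finsupp.sum_add_index' (fun _ => rfl) (fun _ _ _ => rfl)]
      omega
    rw [hp v (lt_of_le_of_lt hv hd), mul_zero]

lemma lowVanish_mul_le (a b : ℕ) :
    (lowVanish a : Ideal (MvPolynomial σ R)) * lowVanish b ≤ lowVanish (a + b) := by
  classical
  rw [Ideal.mul_le]
  intro p hp q hq d hd
  rw [coeff_mul]
  apply Finset.sum_eq_zero
  rintro ⟨u, v⟩ huv
  have huv' : u + v = d := Finset.HasAntidiagonal.mem_antidiagonal.mp huv
  have hsum : (u.sum fun _ n => n) + (v.sum fun _ n => n) = (d.sum fun _ n => n) := by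
    rw [← huv', Finsupp.sum_add_index' (fun _ => rfl) (fun _ _ _ => rfl)]
  rcases lt_or_ge (u.sum fun _ n => n) a with h | h
  · rw [hp u h, zero_mul]
  · rw [hq v (by omega), mul_zero]

lemma span_X_le_lowVanish :
    (Ideal.span (Set.range (X : σ → MvPolynomial σ R))) ≤ lowVanish 1 := by
  classical
  rw [Ideal.span_le]
  rintro _ ⟨i, rfl⟩
  intro d hd
  rw [coeff_X']
  split_ifs with h
  · exfalso
    subst h
    rw [Finsupp.sum_single_index rfl] at hd
    omega
  · rfl

lemma span_X_pow_le_lowVanish (e : ℕ) :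
    (Ideal.span (Set.range (X : σ → MvPolynomial σ R))) ^ e ≤ lowVanish e := by
  induction e with
  | zero => intro p _ d hd; omega
  | succ n ih =>
    calc (Ideal.span (Set.range (X : σ → MvPolynomial σ R))) ^ (n + 1)
        = _ ^ n * _ := pow_succ _ _
      _ ≤ lowVanish n * lowVanish 1 := Ideal.mul_mono ih span_X_le_lowVanish
      _ ≤ lowVanish (n + 1) := lowVanish_mul_le n 1

lemma monomial_one_mem_span_X_pow (d : σ →₀ ℕ) :
    monomial d (1 : R) ∈
      (Ideal.span (Set.range (X : σ → MvPolynomial σ R))) ^ (d.sum fun _ n => n) := by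
  classical
  induction d using Finsupp.induction with
  | zero => simp
  | single_add i n f hif hn ih =>
    have h1 : monomial (Finsupp.single i n + f) (1 : R)
        = X i ^ n * monomial f 1 := by
      rw [X_pow_eq_monomial, monomial_mul, one_mul]
    rw [h1, Finsupp.sum_add_index' (fun _ => rfl) (fun _ _ _ => rfl),
      Finsupp.sum_single_index rfl, pow_add]
    exact Ideal.mul_mem_mul
      (Ideal.pow_mem_pow (Ideal.subset_span (Set.mem_range_self i)) n) ih

lemma key_poly (B : Ideal R) (e : ℕ) :
    (Ideal.span (Set.range (X : σ → MvPolynomial σ R))) ^ e ⊓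
        Ideal.map (C : R →+* MvPolynomial σ R) B ≤
      (Ideal.span (Set.range (X : σ → MvPolynomial σ R))) ^ e *
        Ideal.map (C : R →+* MvPolynomial σ R) B := by
  classical
  rintro p ⟨hpM, hpB⟩
  have hcoeff : ∀ d, coeff d p ∈ B := MvPolynomial.mem_map_C_iff.mp hpB
  have hlow := span_X_pow_le_lowVanish e hpM
  rw [← p.support_sum_monomial_coeff]
  apply Ideal.sum_mem
  intro d hd
  have hdeg : e ≤ (d.sum fun _ n => n) := by
    by_contra h
    exact (MvPolynomial.mem_support_iff.mp hd) (hlow d (by omega))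
  have h1 : monomial d (coeff d p) = monomial d (1 : R) * C (coeff d p) := by
    rw [mul_comm, C_mul_monomial, mul_one]
  rw [h1]
  exact Ideal.mul_mem_mul
    ((Ideal.pow_le_pow_right hdeg) (monomial_one_mem_span_X_pow d))
    (Ideal.mem_map_of_mem _ (hcoeff d))

/-- A finite sum of ideals is below `P` if every summand is. -/
lemma ideal_sum_le {A : Type*} [CommRing A] {ι : Type*} (u : Finset ι)
    (f : ι → Ideal A) {P : Ideal A} (h : ∀ i ∈ u, f i ≤ P) : (∑ i ∈ u, f i) ≤ P := by
  classical
  induction u using Finset.induction_on with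
  | empty => simp
  | @insert a u' hnot ih =>
    rw [Finset.sum_insert hnot, Ideal.add_eq_sup]
    exact sup_le (h a (Finset.mem_insert_self a u'))
      ((ih fun i hi => h i (Finset.mem_insert_of_mem hi)))

/-- A single summand is below a finite sum of ideals. -/
lemma ideal_le_sum {A : Type*} [CommRing A] {ι : Type*} (u : Finset ι)
    (f : ι → Ideal A) {i : ι} (hi : i ∈ u) : f i ≤ ∑ j ∈ u, f j := by
  classical
  rw [← Finset.add_sum_erase u f hi, Ideal.add_eq_sup]
  exact le_sup_left

end AuxPoly

variable (K : Type) [Field K] (s r : ℕ)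

/-- The canonical identification `S ⊗[K] R ≃ R[x₁,…,x_s]`. -/
abbrev Tphi : (MvPolynomial (Fin s) K ⊗[K] MvPolynomial (Fin r) K) ≃+*
    MvPolynomial (Fin s) (MvPolynomial (Fin r) K) :=
  ((Algebra.TensorProduct.comm K (MvPolynomial (Fin s) K)
      (MvPolynomial (Fin r) K)).toRingEquiv).trans
    ((algebraTensorAlgEquiv K (MvPolynomial (Fin r) K)).toRingEquiv)

lemma Tphi_left_tmul (p : MvPolynomial (Fin s) K) :
    Tphi K s r (p ⊗ₜ 1) = MvPolynomial.map (algebraMap K (MvPolynomial (Fin r) K)) p := by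
  simp [Tphi, Algebra.TensorProduct.comm_tmul]

lemma Tphi_right_tmul (f : MvPolynomial (Fin r) K) :
    Tphi K s r (1 ⊗ₜ f) = C f := by
  simp [Tphi, Algebra.TensorProduct.comm_tmul, smul_eq_C_mul]

lemma map_Tphi_left (A : Ideal (MvPolynomial (Fin s) K)) :
    Ideal.map (Tphi K s r).toRingHom (extIdealLeft K s r A) =
      Ideal.map (MvPolynomial.map (algebraMap K (MvPolynomial (Fin r) K)) :
        MvPolynomial (Fin s) K →+* MvPolynomial (Fin s) (MvPolynomial (Fin r) K)) A := by
  rw [extIdealLeft]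
  rw [show (Ideal.map (Algebra.TensorProduct.includeLeft :
      MvPolynomial (Fin s) K →ₐ[K] _) A) = Ideal.map
      ((Algebra.TensorProduct.includeLeft :
      MvPolynomial (Fin s) K →ₐ[K] _).toRingHom) A from rfl,
    Ideal.map_map]
  congr 1
  apply RingHom.ext
  intro p
  simpa using Tphi_left_tmul K s r p

lemma map_Tphi_maxGraded :
    Ideal.map (Tphi K s r).toRingHom (extIdealLeft K s r (maxGradedIdeal K s)) =
      Ideal.span (Set.range (X : Fin s → MvPolynomial (Fin s) (MvPolynomial (Fin r) K))) := by
  rw [map_Tphi_left, maxGradedIdeal, Ideal.map_span, ← Set.range_comp]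
  congr 1
  ext i
  simp

lemma map_Tphi_right (B : Ideal (MvPolynomial (Fin r) K)) :
    Ideal.map (Tphi K s r).toRingHom (extIdealRight K s r B) =
      Ideal.map (C : MvPolynomial (Fin r) K →+*
        MvPolynomial (Fin s) (MvPolynomial (Fin r) K)) B := by
  rw [extIdealRight]
  rw [show (Ideal.map (Algebra.TensorProduct.includeRight :
      MvPolynomial (Fin r) K →ₐ[K] _) B) = Ideal.map
      ((Algebra.TensorProduct.includeRight :
      MvPolynomial (Fin r) K →ₐ[K] _).toRingHom) B from rfl,
    Ideal.map_map]
  congr 1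
  apply RingHom.ext
  intro f
  simpa using Tphi_right_tmul K s r f

/-- Key intersection lemma in `T`:
`m^e T ∩ B T ⊆ (m^e T)(B T)` for an ideal `B` of `R`. -/
lemma key_T (B : Ideal (MvPolynomial (Fin r) K)) (e : ℕ) :
    extIdealLeft K s r (maxGradedIdeal K s) ^ e ⊓ extIdealRight K s r B ≤
      extIdealLeft K s r (maxGradedIdeal K s) ^ e * extIdealRight K s r B := by
  intro x hx
  set φ := (Tphi K s r).toRingHom with hφ
  have hmem : φ x ∈
      Ideal.map φ (extIdealLeft K s r (maxGradedIdeal K s)) ^ e ⊓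
        Ideal.map φ (extIdealRight K s r B) := by
    constructor
    · have := Ideal.mem_map_of_mem φ hx.1
      rwa [Ideal.map_pow] at this
    · exact Ideal.mem_map_of_mem φ hx.2
  rw [map_Tphi_maxGraded, map_Tphi_right] at hmem
  have h2 := key_poly B e hmem
  rw [← map_Tphi_right K s r B, ← map_Tphi_maxGraded K s r, ← Ideal.map_pow,
    ← Ideal.map_mul] at h2
  have h3 : x ∈ Ideal.comap φ (Ideal.map φ
      (extIdealLeft K s r (maxGradedIdeal K s) ^ e * extIdealRight K s r B)) := h2
  rwa [Ideal.comap_map_of_bijective φ (Tphi K s r).bijective] at h3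

/-- With `S`, `R`, `m`, `n`, `I ⊆ m²`, `J ⊆ n²`, `H = I + mn` and
`F = I + J + mn` as above, set `G_0 = H^k` and `G_t = H^k + ∑_{i=1}^{t} (mn)^{k-i} Jⁱ` for
`1 ≤ t ≤ k`. Then for each `1 ≤ t ≤ k` one has
`G_{t-1} ∩ (mn)^{k-t} Jᵗ = m^{k-t+1} n^{k-t} Jᵗ`. -/
theorem fiberProduct_power_intersection
    (I : Ideal (MvPolynomial (Fin s) K)) (J : Ideal (MvPolynomial (Fin r) K))
    (hIhom : ∀ f ∈ I, ∀ d : ℕ, MvPolynomial.homogeneousComponent d f ∈ I)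
    (hJhom : ∀ f ∈ J, ∀ d : ℕ, MvPolynomial.homogeneousComponent d f ∈ J)
    (hI : I ≤ (maxGradedIdeal K s) ^ 2) (hJ : J ≤ (maxGradedIdeal K r) ^ 2)
    (k : ℕ) (hk : 1 ≤ k) (t : ℕ) (ht1 : 1 ≤ t) (htk : t ≤ k) :
    ((extIdealLeft K s r I +
          extIdealLeft K s r (maxGradedIdeal K s) * extIdealRight K s r (maxGradedIdeal K r)) ^ k +
        ∑ i ∈ Finset.Icc 1 (t - 1),
          (extIdealLeft K s r (maxGradedIdeal K s) *
              extIdealRight K s r (maxGradedIdeal K r)) ^ (k - i) *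
            (extIdealRight K s r J) ^ i) ⊓
      ((extIdealLeft K s r (maxGradedIdeal K s) *
          extIdealRight K s r (maxGradedIdeal K r)) ^ (k - t) * (extIdealRight K s r J) ^ t) =
      (extIdealLeft K s r (maxGradedIdeal K s)) ^ (k - t + 1) *
        (extIdealRight K s r (maxGradedIdeal K r)) ^ (k - t) * (extIdealRight K s r J) ^ t := by
  obtain ⟨u, rfl⟩ : ∃ u, t = u + 1 := ⟨t - 1, by omega⟩
  simp only [Nat.add_sub_cancel]
  set a := extIdealLeft K s r (maxGradedIdeal K s) with ha
  set b := extIdealRight K s r (maxGradedIdeal K r) with hb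
  set i := extIdealLeft K s r I with hi
  set j := extIdealRight K s r J with hj
  set c := k - (u + 1) with hc
  have hck : c + 1 ≤ k := by omega
  have hia : i ≤ a ^ 2 := by
    rw [hi, ha, extIdealLeft, extIdealLeft, ← Ideal.map_pow]
    exact Ideal.map_mono hI
  have hjb : j ≤ b ^ 2 := by
    rw [hj, hb, extIdealRight, extIdealRight, ← Ideal.map_pow]
    exact Ideal.map_mono hJ
  have ha2 : a ^ 2 ≤ a := by
    have h21 : a ^ 2 ≤ a ^ 1 := Ideal.pow_le_pow_right one_le_two
    exact h21.trans (le_of_eq (pow_one a))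
  have hHa : i + a * b ≤ a := by
    rw [Ideal.add_eq_sup]
    exact sup_le (hia.trans ha2) Ideal.mul_le_left
  -- G ≤ a ^ (c+1)
  have hG : (i + a * b) ^ k +
      (∑ q ∈ Finset.Icc 1 u, (a * b) ^ (k - q) * j ^ q) ≤ a ^ (c + 1) := by
    rw [Ideal.add_eq_sup]
    apply sup_le
    · calc (i + a * b) ^ k ≤ a ^ k := Ideal.pow_right_mono hHa k
        _ ≤ a ^ (c + 1) := Ideal.pow_le_pow_right hck
    · apply ideal_sum_le
      intro q hq
      rw [Finset.mem_Icc] at hq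
      calc (a * b) ^ (k - q) * j ^ q ≤ (a * b) ^ (k - q) := Ideal.mul_le_left
        _ ≤ a ^ (k - q) := Ideal.pow_right_mono Ideal.mul_le_left _
        _ ≤ a ^ (c + 1) := Ideal.pow_le_pow_right (by omega)
  have hmul : extIdealRight K s r ((maxGradedIdeal K r) ^ c * J ^ (u + 1)) =
      extIdealRight K s r (maxGradedIdeal K r) ^ c * extIdealRight K s r J ^ (u + 1) := by
    simp only [extIdealRight, Ideal.map_mul, Ideal.map_pow]
  -- the right factor is contained in the extension of `n^c J^t`
  have hQ : (a * b) ^ c * j ^ (u + 1) ≤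
      extIdealRight K s r ((maxGradedIdeal K r) ^ c * J ^ (u + 1)) := by
    rw [hmul, ← hb, ← hj]
    exact Ideal.mul_mono_left (Ideal.pow_right_mono Ideal.mul_le_right c)
  apply le_antisymm
  · -- hard direction
    refine le_trans (le_inf (inf_le_left.trans hG) (inf_le_right.trans hQ)) ?_
    refine le_trans (key_T K s r _ (c + 1)) (le_of_eq ?_)
    rw [hmul, ← hb, ← hj]
    exact (mul_assoc _ _ _).symm
  · -- easy direction
    apply le_inf
    · -- RHS ≤ G
      have hbj : b ^ c * j ^ (u + 1) ≤ b ^ (c + 1) * j ^ u := by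
        calc b ^ c * j ^ (u + 1)
            = b ^ c * (j * j ^ u) := by exact congrArg (b ^ c * ·) (pow_succ' j u)
          _ ≤ b ^ c * (b ^ 2 * j ^ u) :=
              Ideal.mul_mono_right (Ideal.mul_mono_left hjb)
          _ = (b ^ c * b ^ 2) * j ^ u := by exact (mul_assoc _ _ _).symm
          _ = b ^ (c + 2) * j ^ u := by
              exact congrArg (· * j ^ u) (pow_add b c 2).symm
          _ ≤ b ^ (c + 1) * j ^ u :=
              Ideal.mul_mono_left (Ideal.pow_le_pow_right (by omega))
      have h1 : a ^ (c + 1) * b ^ c * j ^ (u + 1) ≤ (a * b) ^ (c + 1) * j ^ u := by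
        calc a ^ (c + 1) * b ^ c * j ^ (u + 1)
            = a ^ (c + 1) * (b ^ c * j ^ (u + 1)) := by exact mul_assoc _ _ _
          _ ≤ a ^ (c + 1) * (b ^ (c + 1) * j ^ u) := Ideal.mul_mono_right hbj
          _ = (a ^ (c + 1) * b ^ (c + 1)) * j ^ u := by exact (mul_assoc _ _ _).symm
          _ = (a * b) ^ (c + 1) * j ^ u := by
              exact congrArg (· * j ^ u) (mul_pow a b (c + 1)).symm
      refine h1.trans ?_
      rw [Ideal.add_eq_sup]
      rcases Nat.eq_zero_or_pos u with hu0 | hu1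
      · -- t = 1
        subst hu0
        have hck' : c + 1 = k := by omega
        rw [hck']
        refine le_trans (le_of_eq (by exact mul_one ((a * b) ^ k))) ?_
        refine le_trans (Ideal.pow_right_mono ?_ k) le_sup_left
        rw [Ideal.add_eq_sup]
        exact le_sup_right
      · -- t ≥ 2
        refine le_trans ?_ le_sup_right
        have hmem : u ∈ Finset.Icc 1 u := by
          rw [Finset.mem_Icc]; omega
        have hle := ideal_le_sum (Finset.Icc 1 u)
          (fun q => (a * b) ^ (k - q) * j ^ q) hmem
        have hkq : k - u = c + 1 := by omega
        have hle' : (a * b) ^ (k - u) * j ^ u ≤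
            ∑ x ∈ Finset.Icc 1 u, (a * b) ^ (k - x) * j ^ x := hle
        rw [hkq] at hle'
        exact hle'
    · -- RHS ≤ (ab)^c j^t
      calc a ^ (c + 1) * b ^ c * j ^ (u + 1)
          ≤ a ^ c * b ^ c * j ^ (u + 1) :=
            Ideal.mul_mono_left (Ideal.mul_mono_left (Ideal.pow_le_pow_right (Nat.le_succ c)))
        _ = (a * b) ^ c * j ^ (u + 1) := by
            exact congrArg (· * j ^ (u + 1)) (mul_pow a b c).symm

end
end

section
/- Let S = K[x_1,…,x_s] and R = K[y_1,…,y_r] with s, r > 2, m, n their graded maximal ideals, and T = K[x_1,…,x_s,y_1,…,y_r]. Then a_1(T/(m^k n^k)) = 2k − 2 for every positive integer k, where a_1 is computed with respect to the maximal graded ideal m + n of T. -/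
open MvPolynomial

variable (K : Type) [Field K] {N : ℕ}

/-- The "negative support" `G_α = {i : α i < 0}` of an exponent vector `α ∈ ℤ^N`. -/
def negSupp (α : Fin N → ℤ) : Finset (Fin N) :=
  Finset.univ.filter (fun i => α i < 0)

/-- The multiplicative set generated by the variables `x_i`, `i ∈ W`. -/
noncomputable def varMonoid (W : Finset (Fin N)) : Submonoid (MvPolynomial (Fin N) K) :=
  Submonoid.closure ((fun i => (X i : MvPolynomial (Fin N) K)) '' ↑W)

/-- The Laurent monomial `x^α` in the localization `S[x_i^{-1} : i ∈ W]`,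
for `α ∈ ℤ^N` whose negative support is contained in `W`. -/
noncomputable def xPow (α : Fin N → ℤ) (W : Finset (Fin N)) (h : negSupp α ⊆ W) :
    Localization (varMonoid K W) :=
  algebraMap (MvPolynomial (Fin N) K) _ (∏ i, X i ^ (α i).toNat) *
    IsLocalization.mk' (Localization (varMonoid K W)) (1 : MvPolynomial (Fin N) K)
      (⟨∏ i ∈ negSupp α, X i ^ (-(α i)).toNat,
        Submonoid.prod_mem _ (fun i hi =>
          pow_mem (Submonoid.subset_closure
            (Set.mem_image_of_mem _ (Finset.mem_coe.mpr (h hi)))) _)⟩ : varMonoid K W)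

/-- The degree complex `Δ_α(I)` of a monomial ideal `I`:
`F ∈ Δ_α(I)` iff `F ⊆ [N] ∖ G_α` and `x^α ∉ I·S[x_i^{-1} : i ∈ F ∪ G_α]`. -/
def degreeComplex (I : Ideal (MvPolynomial (Fin N) K)) (α : Fin N → ℤ) :
    Set (Finset (Fin N)) :=
  {F | Disjoint F (negSupp α) ∧
    xPow K α (F ∪ negSupp α) (Finset.subset_union_right) ∉
      Ideal.map (algebraMap (MvPolynomial (Fin N) K)
        (Localization (varMonoid K (F ∪ negSupp α)))) I}

/-- The module of simplicial `K`-chains of `Δ` spanned by the faces of cardinality `m`. -/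
abbrev chainModule (Δ : Set (Finset (Fin N))) (m : ℕ) : Type :=
  {F : Finset (Fin N) // F ∈ Δ ∧ F.card = m} →₀ K

open Classical in
/-- The simplicial boundary map from `m`-cardinality+1 chains to `m`-cardinality chains,
sending a face `F` to `∑_{i ∈ F} (-1)^{|{j ∈ F : j < i}|} (F ∖ {i})`. -/
noncomputable def bdry (Δ : Set (Finset (Fin N))) (m : ℕ) :
    chainModule K Δ (m + 1) →ₗ[K] chainModule K Δ m :=
  Finsupp.lsum K (fun F =>
    ∑ i ∈ F.1.attach,
      ((-1 : K) ^ (F.1.filter (fun j => j < i.1)).card) •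
        (if h : (F.1.erase i.1) ∈ Δ then
          Finsupp.lsingle (⟨F.1.erase i.1, h, by
            simp [Finset.card_erase_of_mem i.2, F.2.2]⟩ :
              {G : Finset (Fin N) // G ∈ Δ ∧ G.card = m})
        else 0))

/-- The full boundary map `∂_m : C_m → C_{m-1}`, with `∂_0 = 0`. -/
noncomputable def bdryFrom (Δ : Set (Finset (Fin N))) :
    (m : ℕ) → (chainModule K Δ m →ₗ[K] chainModule K Δ (m - 1))
  | 0 => 0
  | (n + 1) => bdry K Δ n

/-- The reduced simplicial homology `H̃_{m-1}(Δ; K) = ker ∂_m / im ∂_{m+1}`,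
indexed by the cardinality level `m` (so dimension `m - 1`). -/
noncomputable def homologyAtLevel (Δ : Set (Finset (Fin N))) (m : ℕ) : Type :=
  letI : HasQuotient (LinearMap.ker (bdryFrom K Δ m))
      (Submodule K (LinearMap.ker (bdryFrom K Δ m))) := Submodule.hasQuotient (R := K)
        (M := LinearMap.ker (bdryFrom K Δ m))
  LinearMap.ker (bdryFrom K Δ m) ⧸
    Submodule.comap (LinearMap.ker (bdryFrom K Δ m)).subtype
      (LinearMap.range (bdry K Δ m))

/-- `H̃_d(Δ; K) ≠ 0`, for an arbitrary integer dimension `d`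
(nonzero is only possible when `d ≥ -1`). -/
def reducedHomologyNonzero (Δ : Set (Finset (Fin N))) (d : ℤ) : Prop :=
  ∃ m : ℕ, (m : ℤ) = d + 1 ∧ Nontrivial (homologyAtLevel K Δ m)

/-- The Stanley–Reisner ideal of `Δ`, generated by the squarefree monomials
`x_F = ∏_{i ∈ F} x_i` over the non-faces `F` of `Δ`. -/
noncomputable def stanleyReisner (Δ : Set (Finset (Fin N))) : Ideal (MvPolynomial (Fin N) K) :=
  Ideal.span {f | ∃ F : Finset (Fin N), F ∉ Δ ∧ f = ∏ i ∈ F, X i}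

/-- The monomial prime `P_F = (x_i : i ∉ F)`. -/
noncomputable def facePrime (F : Finset (Fin N)) : Ideal (MvPolynomial (Fin N) K) :=
  Ideal.span {f | ∃ i : Fin N, i ∉ F ∧ f = X i}

/-- The set of facets (maximal faces) of `Δ`. -/
def facets (Δ : Set (Finset (Fin N))) : Set (Finset (Fin N)) :=
  {F | F ∈ Δ ∧ ∀ G ∈ Δ, F ⊆ G → F = G}

/-- `Δ` is a simplicial complex: closed under taking subsets. -/
def DownClosed (Δ : Set (Finset (Fin N))) : Prop :=
  ∀ F ∈ Δ, ∀ G : Finset (Fin N), G ⊆ F → G ∈ Δ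

/-- The `n`-th symbolic power `I_Δ^{(n)} = ⋂_{F facet of Δ} P_F^n`
of the Stanley–Reisner ideal of `Δ`. -/
noncomputable def symbolicPowerSR (Δ : Set (Finset (Fin N))) (n : ℕ) : Ideal (MvPolynomial (Fin N) K) :=
  ⨅ F ∈ facets Δ, (facePrime K F) ^ n

/-- The simplicial complex `Δ(I) = {F : x_F ∉ √I}` attached to a monomial ideal `I`. -/
def complexOfIdeal (I : Ideal (MvPolynomial (Fin N) K)) : Set (Finset (Fin N)) :=
  {F | (∏ i ∈ F, X i) ∉ I.radical}

/-- The set of degrees `t` in which the `i`-th graded local cohomology module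
`H^i_m(S/I)_t` of a monomial quotient is nonzero; by Takayama's formula this is
expressed through the degree complexes: `H^i_m(S/I)_α ≠ 0` iff `G_α ∈ Δ(I)` and
`H̃_{i - |G_α| - 1}(Δ_α(I); K) ≠ 0`. -/
def localCohNonzeroDegrees (i : ℕ) (I : Ideal (MvPolynomial (Fin N) K)) : Set ℤ :=
  {t | ∃ α : Fin N → ℤ, (∑ j, α j) = t ∧ negSupp α ∈ complexOfIdeal K I ∧
    reducedHomologyNonzero K (degreeComplex K I α) ((i : ℤ) - (negSupp α).card - 1)}

/-- The `a_i`-invariant `a_i(S/I) = max {t : H^i_m(S/I)_t ≠ 0}` of a monomial quotient,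
via Takayama's formula. -/
noncomputable def aInvariant (i : ℕ) (I : Ideal (MvPolynomial (Fin N) K)) : ℤ :=
  sSup (localCohNonzeroDegrees K i I)

/-- The link of a face `G` in `Δ`. -/
def link (Δ : Set (Finset (Fin N))) (G : Finset (Fin N)) : Set (Finset (Fin N)) :=
  {F | Disjoint F G ∧ F ∪ G ∈ Δ}

/-- The pure `k`-skeleton of `Γ`: the subcomplex generated by the
`k`-dimensional (i.e. `(k+1)`-element) faces of `Γ`. -/
def pureSkeleton (Γ : Set (Finset (Fin N))) (k : ℕ) : Set (Finset (Fin N)) :=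
  {F | ∃ G ∈ Γ, G.card = k + 1 ∧ F ⊆ G}


section Helpers
open Finset

variable (K : Type) [Field K] {N : ℕ}

lemma X_mem_varMonoid {W : Finset (Fin N)} {i : Fin N} (hi : i ∈ W) :
    (X i : MvPolynomial (Fin N) K) ∈ varMonoid K W :=
  Submonoid.subset_closure (Set.mem_image_of_mem _ (Finset.mem_coe.mpr hi))

lemma prod_X_pow_mem_pow (J : Ideal (MvPolynomial (Fin N) K)) (t : Finset (Fin N))
    (c : Fin N → ℕ) (h : ∀ i ∈ t, X i ∈ J) :
    (∏ i ∈ t, X i ^ c i) ∈ J ^ (∑ i ∈ t, c i) := by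
  classical
  induction t using Finset.induction with
  | empty => simp [Ideal.one_eq_top]
  | @insert a t ha ih =>
    rw [Finset.prod_insert ha, Finset.sum_insert ha, pow_add]
    exact Ideal.mul_mem_mul (Ideal.pow_mem_pow (h a (mem_insert_self _ _)) _)
      (ih (fun i hi => h i (mem_insert_of_mem hi)))

lemma prod_X_pow_mem_pow_of_le (J : Ideal (MvPolynomial (Fin N) K)) (t : Finset (Fin N))
    (c : Fin N → ℕ) (h : ∀ i ∈ t, X i ∈ J) {k : ℕ} (hk : k ≤ ∑ i ∈ t, c i) :
    (∏ i ∈ t, X i ^ c i) ∈ J ^ k :=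
  Ideal.pow_le_pow_right hk (prod_X_pow_mem_pow K J t c h)

/-- generic mk'-manipulation lemma -/
lemma xPow_mem_map (I : Ideal (MvPolynomial (Fin N) K)) (α : Fin N → ℤ)
    (W : Finset (Fin N)) (h : negSupp α ⊆ W) (d : MvPolynomial (Fin N) K)
    (hd : d ∈ varMonoid K W)
    (hmem : (∏ i, X i ^ (α i).toNat) * d ∈ I) :
    xPow K α W h ∈ I.map (algebraMap (MvPolynomial (Fin N) K)
      (Localization (varMonoid K W))) := by
  set den : varMonoid K W := ⟨∏ i ∈ negSupp α, X i ^ (-(α i)).toNat,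
    Submonoid.prod_mem _ (fun i hi =>
      pow_mem (Submonoid.subset_closure
        (Set.mem_image_of_mem _ (Finset.mem_coe.mpr (h hi)))) _)⟩ with hden
  have key : xPow K α W h =
      algebraMap (MvPolynomial (Fin N) K) (Localization (varMonoid K W))
        ((∏ i, X i ^ (α i).toNat) * d) *
      IsLocalization.mk' (Localization (varMonoid K W)) 1 (den * ⟨d, hd⟩) := by
    unfold xPow
    rw [map_mul, mul_assoc]
    congr 1
    have h1 : IsLocalization.mk' (Localization (varMonoid K W)) (1 * d) (den * ⟨d, hd⟩)
        = IsLocalization.mk' (Localization (varMonoid K W)) 1 den :=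
      IsLocalization.mk'_cancel (1 : MvPolynomial (Fin N) K) den ⟨d, hd⟩
    rw [one_mul] at h1
    rw [← h1, IsLocalization.mk'_eq_mul_mk'_one]
  rw [key]
  exact Ideal.mul_mem_right _ _ (Ideal.mem_map_of_mem _ hmem)

set_option maxHeartbeats 1000000 in
/-- generic non-membership via a weight homomorphism sending variables in `B` to `X`. -/
lemma xPow_not_mem_map (I : Ideal (MvPolynomial (Fin N) K)) (α : Fin N → ℤ)
    (W : Finset (Fin N)) (h : negSupp α ⊆ W) (B : Finset (Fin N)) {k : ℕ}
    (hWB : ∀ i ∈ W, i ∉ B)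
    (hI : Ideal.map (MvPolynomial.aeval
        (fun i => if i ∈ B then Polynomial.X else (1 : Polynomial K)) :
        MvPolynomial (Fin N) K →ₐ[K] Polynomial K).toRingHom I ≤
      Ideal.span {Polynomial.X ^ k})
    (hlt : ∑ i ∈ B, (α i).toNat < k) :
    xPow K α W h ∉ I.map (algebraMap (MvPolynomial (Fin N) K)
      (Localization (varMonoid K W))) := by
  classical
  set g : Fin N → Polynomial K := fun i => if i ∈ B then Polynomial.X else 1 with hg
  set φ : MvPolynomial (Fin N) K →+* Polynomial K :=
    (MvPolynomial.aeval g : MvPolynomial (Fin N) K →ₐ[K] Polynomial K).toRingHom with hφ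
  have hφX : ∀ i : Fin N, φ (X i) = g i := fun i => by simp [hφ]
  have hunit : ∀ y : varMonoid K W, IsUnit (φ y) := by
    rintro ⟨y, hy⟩
    refine Submonoid.closure_induction (fun x hx => ?_) ?_ (fun a b _ _ ha hb => ?_) hy
    · obtain ⟨i, hi, rfl⟩ := hx
      rw [hφX, hg]
      simp only [if_neg (hWB i hi)]
      exact isUnit_one
    · simp
    · rw [map_mul]; exact ha.mul hb
  set ψ := IsLocalization.lift (S := Localization (varMonoid K W)) hunit with hψ
  intro hmem
  have h1 : ψ (xPow K α W h) ∈ Ideal.map φ I := by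
    have h2 := Ideal.mem_map_of_mem ψ hmem
    rwa [Ideal.map_map, IsLocalization.lift_comp] at h2
  have h2 : ψ (xPow K α W h) = Polynomial.X ^ (∑ i ∈ B, (α i).toNat) := by
    unfold xPow
    rw [map_mul, IsLocalization.lift_eq]
    have hden : φ (∏ i ∈ negSupp α, X i ^ (-(α i)).toNat) = 1 := by
      rw [map_prod]
      refine Finset.prod_eq_one (fun i hi => ?_)
      rw [map_pow, hφX, hg]
      simp only [if_neg (hWB i (h hi))]
      exact one_pow _
    have hmk : ∀ dd : varMonoid K W, φ ↑dd = 1 →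
        ψ (IsLocalization.mk' (Localization (varMonoid K W)) 1 dd) = 1 := by
      intro dd hdd
      have hs := IsLocalization.mk'_spec (Localization (varMonoid K W)) 1 dd
      apply_fun ψ at hs
      rw [map_mul, IsLocalization.lift_eq, IsLocalization.lift_eq, hdd, map_one, mul_one] at hs
      exact hs
    have hmk' := hmk ⟨∏ i ∈ negSupp α, X i ^ (-(α i)).toNat,
      Submonoid.prod_mem _ (fun i hi =>
        pow_mem (Submonoid.subset_closure
          (Set.mem_image_of_mem _ (Finset.mem_coe.mpr (h hi)))) _)⟩ hden
    rw [hmk', mul_one, map_prod]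
    have : ∀ i : Fin N, φ (X i ^ (α i).toNat) =
        if i ∈ B then Polynomial.X ^ (α i).toNat else 1 := by
      intro i
      rw [map_pow, hφX]
      by_cases hB : i ∈ B <;> simp [hg, hB]
    rw [Finset.prod_congr rfl (fun i _ => this i)]
    rw [Finset.prod_ite_mem Finset.univ B (fun i => Polynomial.X ^ (α i).toNat)]
    rw [Finset.univ_inter, Finset.prod_pow_eq_pow_sum]
  rw [h2] at h1
  have h3 := hI h1
  rw [Ideal.mem_span_singleton] at h3
  have h4 := Polynomial.X_pow_dvd_iff.mp h3 _ hlt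
  rw [Polynomial.coeff_X_pow, if_pos rfl] at h4
  exact one_ne_zero h4

end Helpers

section Concrete
open Finset

variable (K : Type) [Field K]

noncomputable def MxI (s r : ℕ) : Ideal (MvPolynomial (Fin (s+r)) K) :=
  Ideal.span {f | ∃ i : Fin (s + r), (i : ℕ) < s ∧ f = X i}

noncomputable def MyI (s r : ℕ) : Ideal (MvPolynomial (Fin (s+r)) K) :=
  Ideal.span {f | ∃ i : Fin (s + r), s ≤ (i : ℕ) ∧ f = X i}

noncomputable def II (s r k : ℕ) : Ideal (MvPolynomial (Fin (s+r)) K) := MxI K s r ^ k * MyI K s r ^ k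

def BXf (s r : ℕ) : Finset (Fin (s+r)) := univ.filter (fun i => (i : ℕ) < s)
def BYf (s r : ℕ) : Finset (Fin (s+r)) := univ.filter (fun i => ¬ (i : ℕ) < s)

variable {s r k : ℕ}

lemma mem_BXf {i : Fin (s+r)} : i ∈ BXf s r ↔ (i : ℕ) < s := by simp [BXf]
lemma mem_BYf {i : Fin (s+r)} : i ∈ BYf s r ↔ ¬ (i : ℕ) < s := by simp [BYf]

lemma X_mem_MxI {i : Fin (s+r)} (hi : (i : ℕ) < s) : (X i : MvPolynomial (Fin (s+r)) K) ∈ MxI K s r :=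
  Ideal.subset_span ⟨i, hi, rfl⟩

lemma X_mem_MyI {i : Fin (s+r)} (hi : ¬ (i : ℕ) < s) : (X i : MvPolynomial (Fin (s+r)) K) ∈ MyI K s r :=
  Ideal.subset_span ⟨i, le_of_not_gt hi, rfl⟩

lemma monomial_mem_II (c : Fin (s+r) → ℕ)
    (hx : k ≤ ∑ i ∈ BXf s r, c i) (hy : k ≤ ∑ i ∈ BYf s r, c i) :
    (∏ i, X i ^ c i) ∈ II K s r k := by
  rw [← Finset.prod_filter_mul_prod_filter_not (univ : Finset (Fin (s+r))) (fun i => (i : ℕ) < s) (fun i => X i ^ c i)]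
  exact Ideal.mul_mem_mul
    (prod_X_pow_mem_pow_of_le K _ _ c (fun i hi => X_mem_MxI K (mem_BXf.mp hi)) hx)
    (prod_X_pow_mem_pow_of_le K _ _ c (fun i hi => X_mem_MyI K (mem_BYf.mp hi)) hy)

lemma mapII_le_Y :
    Ideal.map (MvPolynomial.aeval
        (fun i => if i ∈ BYf s r then Polynomial.X else (1 : Polynomial K)) :
        MvPolynomial (Fin (s+r)) K →ₐ[K] Polynomial K).toRingHom (II K s r k) ≤
      Ideal.span {Polynomial.X ^ k} := by
  refine le_trans (Ideal.map_mono (Ideal.mul_le_right)) ?_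
  rw [Ideal.map_pow, ← Ideal.span_singleton_pow]
  refine Ideal.pow_right_mono ?_ k
  rw [MyI, Ideal.map_span, Ideal.span_le]
  rintro f ⟨f', ⟨i, hi, rfl⟩, rfl⟩
  have hB : i ∈ BYf s r := mem_BYf.mpr (not_lt_of_ge hi)
  simp only [AlgHom.toRingHom_eq_coe, RingHom.coe_coe, aeval_X, if_pos hB]
  exact Ideal.subset_span rfl

lemma mapII_le_X :
    Ideal.map (MvPolynomial.aeval
        (fun i => if i ∈ BXf s r then Polynomial.X else (1 : Polynomial K)) :
        MvPolynomial (Fin (s+r)) K →ₐ[K] Polynomial K).toRingHom (II K s r k) ≤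
      Ideal.span {Polynomial.X ^ k} := by
  refine le_trans (Ideal.map_mono (Ideal.mul_le_left)) ?_
  rw [Ideal.map_pow, ← Ideal.span_singleton_pow]
  refine Ideal.pow_right_mono ?_ k
  rw [MxI, Ideal.map_span, Ideal.span_le]
  rintro f ⟨f', ⟨i, hi, rfl⟩, rfl⟩
  have hB : i ∈ BXf s r := mem_BXf.mpr hi
  simp only [AlgHom.toRingHom_eq_coe, RingHom.coe_coe, aeval_X, if_pos hB]
  exact Ideal.subset_span rfl

lemma xPow_notmem_X (α : Fin (s+r) → ℤ) (W : Finset (Fin (s+r))) (h : negSupp α ⊆ W)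
    (hW : ∀ i ∈ W, (i : ℕ) < s) (hlt : ∑ i ∈ BYf s r, (α i).toNat < k) :
    xPow K α W h ∉ (II K s r k).map (algebraMap (MvPolynomial (Fin (s+r)) K)
      (Localization (varMonoid K W))) :=
  xPow_not_mem_map K _ α W h (BYf s r)
    (fun i hi hB => (mem_BYf.mp hB) (hW i hi)) (mapII_le_Y K) hlt

lemma xPow_notmem_Y (α : Fin (s+r) → ℤ) (W : Finset (Fin (s+r))) (h : negSupp α ⊆ W)
    (hW : ∀ i ∈ W, ¬ (i : ℕ) < s) (hlt : ∑ i ∈ BXf s r, (α i).toNat < k) :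
    xPow K α W h ∉ (II K s r k).map (algebraMap (MvPolynomial (Fin (s+r)) K)
      (Localization (varMonoid K W))) :=
  xPow_not_mem_map K _ α W h (BXf s r)
    (fun i hi hB => hW i hi (mem_BXf.mp hB)) (mapII_le_X K) hlt

lemma prod_single_pow (u : Fin (s+r)) :
    (∏ i, (X i : MvPolynomial (Fin (s+r)) K) ^ (if i = u then k else 0)) = X u ^ k := by
  rw [show (fun i => (X i : MvPolynomial (Fin (s+r)) K) ^ (if i = u then k else 0)) =
    (fun i => if i = u then X i ^ k else 1) from funext (fun i => by split <;> simp),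
    Finset.prod_ite_eq' univ u (fun i => (X i : MvPolynomial (Fin (s+r)) K) ^ k)]
  simp

lemma xPow_mem_II_of_pair (α : Fin (s+r) → ℤ) (W : Finset (Fin (s+r))) (h : negSupp α ⊆ W)
    (u w : Fin (s+r)) (hu : u ∈ W) (hw : w ∈ W) (hus : (u : ℕ) < s) (hws : ¬ (w : ℕ) < s) :
    xPow K α W h ∈ (II K s r k).map (algebraMap (MvPolynomial (Fin (s+r)) K)
      (Localization (varMonoid K W))) := by
  refine xPow_mem_map K _ α W h (X u ^ k * X w ^ k)
    (mul_mem (pow_mem (X_mem_varMonoid K hu) k) (pow_mem (X_mem_varMonoid K hw) k)) ?_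
  have key : (∏ i, (X i : MvPolynomial (Fin (s+r)) K) ^ (α i).toNat) * (X u ^ k * X w ^ k)
      = ∏ i, X i ^ ((α i).toNat + ((if i = u then k else 0) + (if i = w then k else 0))) := by
    simp only [pow_add, Finset.prod_mul_distrib, prod_single_pow]
  rw [key]
  refine monomial_mem_II K _ ?_ ?_
  · rw [Finset.sum_add_distrib, Finset.sum_add_distrib, Finset.sum_ite_eq' (BXf s r) u,
      Finset.sum_ite_eq' (BXf s r) w, if_pos (mem_BXf.mpr hus)]
    omega
  · rw [Finset.sum_add_distrib, Finset.sum_add_distrib, Finset.sum_ite_eq' (BYf s r) u,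
      Finset.sum_ite_eq' (BYf s r) w, if_pos (mem_BYf.mpr hws)]
    omega

lemma xPow_mem_II_of_x (α : Fin (s+r) → ℤ) (W : Finset (Fin (s+r))) (h : negSupp α ⊆ W)
    (u : Fin (s+r)) (hu : u ∈ W) (hus : (u : ℕ) < s)
    (hb : k ≤ ∑ i ∈ BYf s r, (α i).toNat) :
    xPow K α W h ∈ (II K s r k).map (algebraMap (MvPolynomial (Fin (s+r)) K)
      (Localization (varMonoid K W))) := by
  refine xPow_mem_map K _ α W h (X u ^ k) (pow_mem (X_mem_varMonoid K hu) k) ?_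
  have key : (∏ i, (X i : MvPolynomial (Fin (s+r)) K) ^ (α i).toNat) * X u ^ k
      = ∏ i, X i ^ ((α i).toNat + (if i = u then k else 0)) := by
    simp only [pow_add, Finset.prod_mul_distrib, prod_single_pow]
  rw [key]
  refine monomial_mem_II K _ ?_ ?_
  · rw [Finset.sum_add_distrib, Finset.sum_ite_eq' (BXf s r) u, if_pos (mem_BXf.mpr hus)]
    omega
  · rw [Finset.sum_add_distrib, Finset.sum_ite_eq' (BYf s r) u]
    omega

lemma xPow_mem_II_of_y (α : Fin (s+r) → ℤ) (W : Finset (Fin (s+r))) (h : negSupp α ⊆ W)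
    (w : Fin (s+r)) (hw : w ∈ W) (hws : ¬ (w : ℕ) < s)
    (ha : k ≤ ∑ i ∈ BXf s r, (α i).toNat) :
    xPow K α W h ∈ (II K s r k).map (algebraMap (MvPolynomial (Fin (s+r)) K)
      (Localization (varMonoid K W))) := by
  refine xPow_mem_map K _ α W h (X w ^ k) (pow_mem (X_mem_varMonoid K hw) k) ?_
  have key : (∏ i, (X i : MvPolynomial (Fin (s+r)) K) ^ (α i).toNat) * X w ^ k
      = ∏ i, X i ^ ((α i).toNat + (if i = w then k else 0)) := by
    simp only [pow_add, Finset.prod_mul_distrib, prod_single_pow]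
  rw [key]
  refine monomial_mem_II K _ ?_ ?_
  · rw [Finset.sum_add_distrib, Finset.sum_ite_eq' (BXf s r) w]
    omega
  · rw [Finset.sum_add_distrib, Finset.sum_ite_eq' (BYf s r) w, if_pos (mem_BYf.mpr hws)]
    omega

lemma xPow_mem_II_of_both (α : Fin (s+r) → ℤ) (W : Finset (Fin (s+r))) (h : negSupp α ⊆ W)
    (ha : k ≤ ∑ i ∈ BXf s r, (α i).toNat) (hb : k ≤ ∑ i ∈ BYf s r, (α i).toNat) :
    xPow K α W h ∈ (II K s r k).map (algebraMap (MvPolynomial (Fin (s+r)) K)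
      (Localization (varMonoid K W))) := by
  refine xPow_mem_map K _ α W h 1 (one_mem _) ?_
  rw [mul_one]
  exact monomial_mem_II K _ ha hb

end Concrete

section Homology
open Finset

variable (K : Type) [Field K] {N : ℕ} (Δ : Set (Finset (Fin N)))

lemma subsingleton_homology_of_subsingleton_chain (m : ℕ)
    (hs : Subsingleton (chainModule K Δ m)) : Subsingleton (homologyAtLevel K Δ m) := by
  unfold homologyAtLevel
  have : Subsingleton (LinearMap.ker (bdryFrom K Δ m)) :=
    ⟨fun a b => Subtype.ext (Subsingleton.elim _ _)⟩
  exact (Submodule.Quotient.mk_surjective _).subsingleton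

lemma subsingleton_chain_of_no_face (m : ℕ)
    (h : ∀ F : Finset (Fin N), ¬(F ∈ Δ ∧ F.card = m)) : Subsingleton (chainModule K Δ m) :=
  ⟨fun a b => Finsupp.ext (fun x => absurd x.2 (h x.1))⟩

lemma subsingleton_homology_of_ker_le_range (m : ℕ)
    (h : ∀ z : chainModule K Δ m, z ∈ LinearMap.ker (bdryFrom K Δ m) →
      z ∈ LinearMap.range (bdry K Δ m)) : Subsingleton (homologyAtLevel K Δ m) := by
  unfold homologyAtLevel
  refine Submodule.Quotient.subsingleton_iff.mpr (Submodule.eq_top_iff'.mpr ?_)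
  intro x
  exact h x.1 x.2

lemma nontrivial_homology (m : ℕ) (z : chainModule K Δ m)
    (hz : z ∈ LinearMap.ker (bdryFrom K Δ m)) (hnr : z ∉ LinearMap.range (bdry K Δ m)) :
    Nontrivial (homologyAtLevel K Δ m) := by
  unfold homologyAtLevel
  refine ⟨Submodule.Quotient.mk ⟨z, hz⟩, 0, fun hq => hnr ?_⟩
  rw [Submodule.Quotient.mk_eq_zero] at hq
  exact hq

open Classical in
lemma bdry_single (m : ℕ) (F : {F : Finset (Fin N) // F ∈ Δ ∧ F.card = m + 1}) (c : K) :
    bdry K Δ m (Finsupp.single F c) =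
      ∑ j ∈ F.1, ((-1 : K) ^ (F.1.filter (fun x => x < j)).card) •
        (if hP : F.1.erase j ∈ Δ ∧ (F.1.erase j).card = m then
          Finsupp.single (⟨F.1.erase j, hP⟩ : {G : Finset (Fin N) // G ∈ Δ ∧ G.card = m}) c
         else 0) := by
  unfold bdry
  rw [Finsupp.lsum_single, LinearMap.sum_apply]
  rw [← Finset.sum_attach F.1 (fun j => ((-1 : K) ^ (F.1.filter (fun x => x < j)).card) •
        (if hP : F.1.erase j ∈ Δ ∧ (F.1.erase j).card = m then
          Finsupp.single (⟨F.1.erase j, hP⟩ : {G : Finset (Fin N) // G ∈ Δ ∧ G.card = m}) c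
         else 0))]
  refine Finset.sum_congr rfl (fun i _ => ?_)
  have hc : (F.1.erase i.1).card = m := by
    simp [Finset.card_erase_of_mem i.2, F.2.2]
  by_cases hΔ' : F.1.erase i.1 ∈ Δ
  · rw [dif_pos hΔ', dif_pos ⟨hΔ', hc⟩]
    simp
  · rw [dif_neg hΔ', dif_neg (fun hh => hΔ' hh.1)]
    simp

open Classical in
lemma bdry_single_vertex (v : Fin N) (hv : {v} ∈ Δ)
    (hc : ({v} : Finset (Fin N)).card = 0 + 1) (c : K) :
    bdry K Δ 0 (Finsupp.single ⟨{v}, hv, hc⟩ c) =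
      (if h : (∅ : Finset (Fin N)) ∈ Δ then
        Finsupp.single (⟨∅, h, Finset.card_empty⟩ : {G : Finset (Fin N) // G ∈ Δ ∧ G.card = 0}) c
       else 0) := by
  rw [bdry_single]
  rw [Finset.sum_singleton, Finset.filter_singleton, if_neg (lt_irrefl v),
    Finset.erase_singleton]
  by_cases h : (∅ : Finset (Fin N)) ∈ Δ
  · rw [dif_pos ⟨h, Finset.card_empty⟩, dif_pos h]
    simp
  · rw [dif_neg (fun hh => h hh.1), dif_neg h]
    simp

open Classical in
lemma bdry_single_pair (u w : Fin N) (huw : u < w) (h2 : ({u, w} : Finset (Fin N)) ∈ Δ)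
    (hu : ({u} : Finset (Fin N)) ∈ Δ) (hw : ({w} : Finset (Fin N)) ∈ Δ)
    (hc : ({u, w} : Finset (Fin N)).card = 1 + 1) (c : K) :
    bdry K Δ 1 (Finsupp.single ⟨{u, w}, h2, hc⟩ c) =
      Finsupp.single (⟨{w}, hw, Finset.card_singleton w⟩ : {G : Finset (Fin N) // G ∈ Δ ∧ G.card = 1}) c
      - Finsupp.single (⟨{u}, hu, Finset.card_singleton u⟩ : {G : Finset (Fin N) // G ∈ Δ ∧ G.card = 1}) c := by
  have hne : u ≠ w := ne_of_lt huw
  rw [bdry_single, Finset.sum_pair hne]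
  have e1 : ({u, w} : Finset (Fin N)).erase u = {w} :=
    Finset.erase_insert (by simp [hne])
  have e2 : ({u, w} : Finset (Fin N)).erase w = {u} := by
    rw [Finset.pair_comm]
    exact Finset.erase_insert (by simp [hne.symm])
  have f1 : ({u, w} : Finset (Fin N)).filter (fun x => x < u) = ∅ := by
    rw [Finset.filter_insert, if_neg (lt_irrefl u), Finset.filter_singleton,
      if_neg (asymm huw)]
  have f2 : ({u, w} : Finset (Fin N)).filter (fun x => x < w) = {u} := by
    rw [Finset.filter_insert, if_pos huw, Finset.filter_singleton, if_neg (lt_irrefl w)]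
    simp
  rw [e1, e2, f1, f2]
  rw [dif_pos ⟨hw, Finset.card_singleton w⟩, dif_pos ⟨hu, Finset.card_singleton u⟩]
  simp [sub_eq_add_neg]

end Homology

section SimplexH
open Finset

variable (K : Type) [Field K] {N : ℕ} (Δ : Set (Finset (Fin N)))

lemma simplex_ker_le_range (V : Finset (Fin N)) (v₀ : Fin N) (hv₀ : v₀ ∈ V)
    (hΔ : ∀ F : Finset (Fin N), F ∈ Δ ↔ F ⊆ V) (z : chainModule K Δ 1)
    (hz : z ∈ LinearMap.ker (bdryFrom K Δ 1)) : z ∈ LinearMap.range (bdry K Δ 1) := by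
  classical
  have hemp : (∅ : Finset (Fin N)) ∈ Δ := (hΔ ∅).mpr (Finset.empty_subset V)
  set E0 : {G : Finset (Fin N) // G ∈ Δ ∧ G.card = 0} := ⟨∅, hemp, Finset.card_empty⟩ with hE0
  have hv₀Δ : ({v₀} : Finset (Fin N)) ∈ Δ := (hΔ _).mpr (Finset.singleton_subset_iff.mpr hv₀)
  set σ0 : {G : Finset (Fin N) // G ∈ Δ ∧ G.card = 1} :=
    ⟨{v₀}, hv₀Δ, Finset.card_singleton v₀⟩ with hσ0
  have hvert : ∀ (σ : {G : Finset (Fin N) // G ∈ Δ ∧ G.card = 1}) (c : K),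
      bdry K Δ 0 (Finsupp.single σ c) = Finsupp.single E0 c := by
    intro σ c
    obtain ⟨v, hv⟩ := Finset.card_eq_one.mp σ.2.2
    have hσ : σ = ⟨{v}, hv ▸ σ.2.1, hv ▸ σ.2.2⟩ := Subtype.ext hv
    rw [hσ, bdry_single_vertex K Δ v (hv ▸ σ.2.1) (hv ▸ σ.2.2) c, dif_pos hemp]
  have hz0 : bdry K Δ 0 z = 0 := hz
  have hrep : bdry K Δ 0 z = z.sum fun _ c => Finsupp.single E0 c := by
    conv_lhs => rw [← Finsupp.sum_single z]
    rw [map_finsuppSum]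
    exact Finsupp.sum_congr (fun σ _ => hvert σ _)
  have hS : (z.sum fun _ c => c) = 0 := by
    have h1 : (z.sum fun _ c => Finsupp.single E0 c) = 0 := by rw [← hrep]; exact hz0
    have h2 := congrArg (fun f : chainModule K Δ 0 => f E0) h1
    simpa [Finsupp.sum_apply] using h2
  have hdiff : ∀ σ : {G : Finset (Fin N) // G ∈ Δ ∧ G.card = 1},
      (Finsupp.single σ (1 : K) - Finsupp.single σ0 1) ∈ LinearMap.range (bdry K Δ 1) := by
    intro σ
    obtain ⟨v, hv⟩ := Finset.card_eq_one.mp σ.2.2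
    have hvV : v ∈ V := by
      have h3 := (hΔ σ.1).mp σ.2.1
      rw [hv] at h3
      exact h3 (Finset.mem_singleton_self v)
    have hvΔ : ({v} : Finset (Fin N)) ∈ Δ := hv ▸ σ.2.1
    have hσv : σ = ⟨{v}, hvΔ, Finset.card_singleton v⟩ := Subtype.ext hv
    by_cases hvv : v = v₀
    · have h4 : σ = σ0 := Subtype.ext (by rw [hv, hvv])
      rw [h4, sub_self]
      exact zero_mem _
    · rcases lt_or_gt_of_ne hvv with hlt | hlt
      · -- v < v₀ : use pair {v, v₀}
        have hp : ({v, v₀} : Finset (Fin N)) ∈ Δ :=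
          (hΔ _).mpr (by rw [Finset.insert_subset_iff]; exact ⟨hvV, Finset.singleton_subset_iff.mpr hv₀⟩)
        refine ⟨-Finsupp.single ⟨{v, v₀}, hp, Finset.card_pair hvv⟩ 1, ?_⟩
        rw [map_neg, bdry_single_pair K Δ v v₀ hlt hp hvΔ hv₀Δ (Finset.card_pair hvv) 1, neg_sub, hσv]
      · -- v₀ < v : use pair {v₀, v}
        have hp : ({v₀, v} : Finset (Fin N)) ∈ Δ :=
          (hΔ _).mpr (by rw [Finset.insert_subset_iff]; exact ⟨hv₀, Finset.singleton_subset_iff.mpr hvV⟩)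
        refine ⟨Finsupp.single ⟨{v₀, v}, hp, Finset.card_pair (Ne.symm hvv)⟩ 1, ?_⟩
        rw [bdry_single_pair K Δ v₀ v hlt hp hv₀Δ hvΔ (Finset.card_pair (Ne.symm hvv)) 1, hσv]
  have hrepr : z = ∑ σ ∈ z.support, (z σ) • (Finsupp.single σ (1 : K) - Finsupp.single σ0 1) := by
    have e1 : ∑ σ ∈ z.support, (z σ) • (Finsupp.single σ (1 : K) - Finsupp.single σ0 1)
        = (∑ σ ∈ z.support, Finsupp.single σ (z σ))
          - (∑ σ ∈ z.support, z σ) • Finsupp.single σ0 (1 : K) := by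
      rw [Finset.sum_smul, ← Finset.sum_sub_distrib]
      refine Finset.sum_congr rfl (fun σ _ => ?_)
      rw [smul_sub, Finsupp.smul_single, smul_eq_mul, mul_one]
    have e2 : (∑ σ ∈ z.support, Finsupp.single σ (z σ)) = z := Finsupp.sum_single z
    have e3 : (∑ σ ∈ z.support, z σ) = 0 := hS
    rw [e1, e2, e3, zero_smul, sub_zero]
  rw [hrepr]
  exact Submodule.sum_mem _ (fun σ _ => Submodule.smul_mem _ _ (hdiff σ))

lemma nontrivial_H1 (SX : Finset (Fin N)) (vx vy : Fin N) (hvx : vx ∈ SX) (hvy : vy ∉ SX)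
    (hx : ({vx} : Finset (Fin N)) ∈ Δ) (hy : ({vy} : Finset (Fin N)) ∈ Δ)
    (hVert : ∀ v : Fin N, ∀ F ∈ Δ, v ∈ F → ({v} : Finset (Fin N)) ∈ Δ)
    (hEdge : ∀ u v : Fin N, u ∈ SX → v ∉ SX → ({u, v} : Finset (Fin N)) ∉ Δ) :
    Nontrivial (homologyAtLevel K Δ 1) := by
  classical
  set σx : {G : Finset (Fin N) // G ∈ Δ ∧ G.card = 1} := ⟨{vx}, hx, Finset.card_singleton vx⟩
  set σy : {G : Finset (Fin N) // G ∈ Δ ∧ G.card = 1} := ⟨{vy}, hy, Finset.card_singleton vy⟩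
  set z : chainModule K Δ 1 := Finsupp.single σx 1 - Finsupp.single σy 1 with hzdef
  set φ : chainModule K Δ 1 →ₗ[K] K :=
    Finsupp.lsum K (fun σ => if σ.1 ⊆ SX then (LinearMap.id : K →ₗ[K] K) else 0) with hφdef
  have hφ_single : ∀ (σ : {G : Finset (Fin N) // G ∈ Δ ∧ G.card = 1}) (c : K),
      φ (Finsupp.single σ c) = if σ.1 ⊆ SX then c else 0 := by
    intro σ c
    rw [hφdef, Finsupp.lsum_single]
    split <;> simp
  have hφz : φ z = 1 := by
    rw [hzdef, map_sub, hφ_single, hφ_single]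
    rw [if_pos (Finset.singleton_subset_iff.mpr hvx),
      if_neg (fun hh => hvy (Finset.singleton_subset_iff.mp hh))]
    simp
  have hφbd : ∀ (τ : {G : Finset (Fin N) // G ∈ Δ ∧ G.card = 1 + 1}) (c : K),
      φ (bdry K Δ 1 (Finsupp.single τ c)) = 0 := by
    intro τ c
    obtain ⟨u, v, huv, hτ⟩ := Finset.card_eq_two.mp τ.2.2
    have hum : ({u} : Finset (Fin N)) ∈ Δ := hVert u τ.1 τ.2.1 (by rw [hτ]; simp)
    have hvm : ({v} : Finset (Fin N)) ∈ Δ := hVert v τ.1 τ.2.1 (by rw [hτ]; simp)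
    have hiff : (u ∈ SX ↔ v ∈ SX) := by
      constructor
      · intro hu
        by_contra hv
        exact hEdge u v hu hv (hτ ▸ τ.2.1)
      · intro hv
        by_contra hu
        refine hEdge v u hv hu ?_
        rw [Finset.pair_comm]
        exact (hτ ▸ τ.2.1)
    rcases huv.lt_or_gt with hlt | hlt
    · have hτm : τ = ⟨{u, v}, hτ ▸ τ.2.1, hτ ▸ τ.2.2⟩ := Subtype.ext hτ
      rw [hτm, bdry_single_pair K Δ u v hlt (hτ ▸ τ.2.1) hum hvm (hτ ▸ τ.2.2) c, map_sub, hφ_single, hφ_single]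
      by_cases hu : u ∈ SX
      · rw [if_pos (Finset.singleton_subset_iff.mpr (hiff.mp hu)),
          if_pos (Finset.singleton_subset_iff.mpr hu), sub_self]
      · rw [if_neg (fun hh => hu (hiff.mpr (Finset.singleton_subset_iff.mp hh))),
          if_neg (fun hh => hu (Finset.singleton_subset_iff.mp hh)), sub_self]
    · have hτ' : τ.1 = {v, u} := by rw [hτ, Finset.pair_comm]
      have hτm : τ = ⟨{v, u}, hτ' ▸ τ.2.1, hτ' ▸ τ.2.2⟩ := Subtype.ext hτ'
      rw [hτm, bdry_single_pair K Δ v u hlt (hτ' ▸ τ.2.1) hvm hum (hτ' ▸ τ.2.2) c, map_sub, hφ_single, hφ_single]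
      by_cases hu : u ∈ SX
      · rw [if_pos (Finset.singleton_subset_iff.mpr hu),
          if_pos (Finset.singleton_subset_iff.mpr (hiff.mp hu)), sub_self]
      · rw [if_neg (fun hh => hu (Finset.singleton_subset_iff.mp hh)),
          if_neg (fun hh => hu (hiff.mpr (Finset.singleton_subset_iff.mp hh))), sub_self]
  refine nontrivial_homology K Δ 1 z ?_ ?_
  · show bdryFrom K Δ 1 z = 0
    show bdry K Δ 0 z = 0
    rw [hzdef, map_sub, bdry_single_vertex K Δ vx hx (Finset.card_singleton vx) 1,
      bdry_single_vertex K Δ vy hy (Finset.card_singleton vy) 1, sub_self]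
  · rintro ⟨w, hw⟩
    have hφw : φ (bdry K Δ 1 w) = 0 := by
      conv_lhs => rw [← Finsupp.sum_single w, map_finsuppSum, map_finsuppSum]
      exact Finset.sum_eq_zero (fun τ _ => hφbd τ (w τ))
    rw [hw, hφz] at hφw
    exact one_ne_zero hφw

end SimplexH

/-- Let `S = K[x₁,…,x_s]` and `R = K[y₁,…,y_r]` with `s, r > 2`, `m`, `n`
their graded maximal ideals, and `T = K[x₁,…,x_s,y₁,…,y_r]` (realized as the polynomial
ring on `Fin (s+r)`, the first `s` variables being the `x`'s). Then
`a₁(T/(m^k n^k)) = 2k − 2` for every positive integer `k`, where `a₁` is computed with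
respect to the maximal graded ideal `m + n` of `T`. -/
theorem aInvariant_one_pow_mul_pow
    (s r : ℕ) (hs : 2 < s) (hr : 2 < r) (k : ℕ) (hk : 1 ≤ k) :
    aInvariant K 1
        ((Ideal.span {f : MvPolynomial (Fin (s + r)) K |
            ∃ i : Fin (s + r), (i : ℕ) < s ∧ f = X i}) ^ k *
          (Ideal.span {f : MvPolynomial (Fin (s + r)) K |
            ∃ i : Fin (s + r), s ≤ (i : ℕ) ∧ f = X i}) ^ k) =
      2 * (k : ℤ) - 2 := by
  classical
  show aInvariant K 1 (II K s r k) = 2 * (k : ℤ) - 2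
  set x0 : Fin (s + r) := ⟨0, by omega⟩ with hx0def
  set y0 : Fin (s + r) := ⟨s, by omega⟩ with hy0def
  have hx0y0 : x0 ≠ y0 := by
    intro h
    have := congrArg (Fin.val) h
    simp [hx0def, hy0def] at this
    omega
  have hx0s : (x0 : ℕ) < s := by simp [hx0def]; omega
  have hy0s : ¬ (y0 : ℕ) < s := by simp [hy0def]
  -- ===================== MEMBERSHIP =====================
  set α0 : Fin (s + r) → ℤ :=
    fun i => (if i = x0 then ((k : ℤ) - 1) else 0) + (if i = y0 then ((k : ℤ) - 1) else 0)
    with hα0def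
  have hα0nonneg : ∀ i, 0 ≤ α0 i := by
    intro i
    rw [hα0def]
    dsimp only
    split <;> split <;> omega
  have hneg : negSupp α0 = ∅ := by
    unfold negSupp
    rw [Finset.filter_eq_empty_iff]
    intro i _
    exact not_lt.mpr (hα0nonneg i)
  have hα0sum : (∑ j, α0 j) = 2 * (k : ℤ) - 2 := by
    rw [hα0def]
    rw [Finset.sum_add_distrib,
      Finset.sum_ite_eq' Finset.univ x0 (fun _ => (k : ℤ) - 1),
      Finset.sum_ite_eq' Finset.univ y0 (fun _ => (k : ℤ) - 1),
      if_pos (Finset.mem_univ x0), if_pos (Finset.mem_univ y0)]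
    ring
  have hα0pt : ∀ i, (α0 i).toNat =
      (if i = x0 then k - 1 else 0) + (if i = y0 then k - 1 else 0) := by
    intro i
    by_cases h1 : i = x0
    · subst h1
      rw [hα0def]
      simp [hx0y0]
      try omega
    · by_cases h2 : i = y0
      · subst h2
        rw [hα0def]
        simp [Ne.symm hx0y0]
        try omega
      · rw [hα0def]
        simp [h1, h2]
  have hα0X : ∑ i ∈ BXf s r, (α0 i).toNat = k - 1 := by
    rw [Finset.sum_congr rfl (fun i _ => hα0pt i), Finset.sum_add_distrib,
      Finset.sum_ite_eq' (BXf s r) x0 (fun _ => k - 1),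
      Finset.sum_ite_eq' (BXf s r) y0 (fun _ => k - 1),
      if_pos (mem_BXf.mpr hx0s), if_neg (fun hc => hy0s (mem_BXf.mp hc))]
    omega
  have hα0Y : ∑ i ∈ BYf s r, (α0 i).toNat = k - 1 := by
    rw [Finset.sum_congr rfl (fun i _ => hα0pt i), Finset.sum_add_distrib,
      Finset.sum_ite_eq' (BYf s r) x0 (fun _ => k - 1),
      Finset.sum_ite_eq' (BYf s r) y0 (fun _ => k - 1),
      if_neg (fun hc => (mem_BYf.mp hc) hx0s), if_pos (mem_BYf.mpr hy0s)]
    omega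
  have hvertgen : ∀ v : Fin (s + r), ({v} : Finset (Fin (s + r))) ∈
      degreeComplex K (II K s r k) α0 := by
    intro v
    constructor
    · rw [hneg]
      exact Finset.disjoint_empty_right _
    · by_cases hvs : (v : ℕ) < s
      · refine xPow_notmem_X K α0 _ _ ?_ ?_
        · intro i hi
          rcases Finset.mem_union.mp hi with h' | h'
          · rwa [Finset.mem_singleton.mp h']
          · rw [hneg] at h'
            exact absurd h' (Finset.notMem_empty i)
        · rw [hα0Y]; omega
      · refine xPow_notmem_Y K α0 _ _ ?_ ?_
        · intro i hi
          rcases Finset.mem_union.mp hi with h' | h'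
          · rwa [Finset.mem_singleton.mp h']
          · rw [hneg] at h'
            exact absurd h' (Finset.notMem_empty i)
        · rw [hα0X]; omega
  have hmem : (2 * (k : ℤ) - 2) ∈ localCohNonzeroDegrees K 1 (II K s r k) := by
    refine ⟨α0, hα0sum, ?_, ?_⟩
    · -- complexOfIdeal
      show (∏ i ∈ negSupp α0, X i) ∉ (II K s r k).radical
      rw [hneg, Finset.prod_empty]
      intro hrad
      have htop : (II K s r k).radical = ⊤ := Ideal.eq_top_iff_one _ |>.mpr hrad
      have hItop : II K s r k = ⊤ := Ideal.radical_eq_top.mp htop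
      have h1 : (1 : MvPolynomial (Fin (s + r)) K) ∈ II K s r k := by
        rw [hItop]; trivial
      have hIle : II K s r k ≤ MxI K s r :=
        le_trans Ideal.mul_le_left (Ideal.pow_le_self (by omega : k ≠ 0))
      have h2 : (1 : MvPolynomial (Fin (s + r)) K) ∈ MxI K s r := hIle h1
      have hker : MxI K s r ≤ RingHom.ker
          ((MvPolynomial.aeval (fun _ => (0 : K)) :
            MvPolynomial (Fin (s + r)) K →ₐ[K] K) : MvPolynomial (Fin (s + r)) K →+* K) := by
        rw [MxI, Ideal.span_le]
        rintro f ⟨i, hi, rfl⟩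
        rw [SetLike.mem_coe, RingHom.mem_ker]
        simp
      have h3 := hker h2
      rw [RingHom.mem_ker, map_one] at h3
      exact one_ne_zero h3
    · -- reducedHomologyNonzero
      refine ⟨1, by simp [hneg], ?_⟩
      refine nontrivial_H1 K _ (BXf s r) x0 y0 (mem_BXf.mpr hx0s)
        (fun hc => hy0s (mem_BXf.mp hc)) (hvertgen x0) (hvertgen y0)
        (fun v F _ _ => hvertgen v) ?_
      intro u v hu hv hmem'
      refine hmem'.2 (xPow_mem_II_of_pair K α0 _ _ u v ?_ ?_ (mem_BXf.mp hu)
        (fun hvs => hv (mem_BXf.mpr hvs)))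
      · exact Finset.mem_union_left _ (Finset.mem_insert_self u {v})
      · exact Finset.mem_union_left _ (Finset.mem_insert_of_mem (Finset.mem_singleton_self v))
  -- ===================== UPPER BOUND =====================
  have hub : ∀ t ∈ localCohNonzeroDegrees K 1 (II K s r k), t ≤ 2 * (k : ℤ) - 2 := by
    rintro t ⟨α, hsumα, hGcpx, hred⟩
    obtain ⟨m, hm, hnt⟩ := hred
    have hcard : (m = 0 ∧ (negSupp α).card = 1) ∨ (m = 1 ∧ (negSupp α).card = 0) := by
      omega
    by_contra hgt
    push_neg at hgt
    rw [← hsumα] at hgt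
    rcases hcard with ⟨hm0, hG1⟩ | ⟨hm1, hG0⟩
    · -- |G| = 1 : always contradiction
      obtain ⟨g, hg⟩ := Finset.card_eq_one.mp hG1
      rw [hm0] at hnt
      refine (not_nontrivial_iff_subsingleton.mpr ?_) hnt
      by_cases hemp : (∅ : Finset (Fin (s + r))) ∈ degreeComplex K (II K s r k) α
      · have hnm := hemp.2
        by_cases hgs : (g : ℕ) < s
        · have hby : ∑ i ∈ BYf s r, (α i).toNat < k := by
            by_contra hge
            push_neg at hge
            exact hnm (xPow_mem_II_of_x K α _ _ g
              (Finset.mem_union_right _ (by rw [hg]; exact Finset.mem_singleton_self g))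
              hgs hge)
          set v : Fin (s + r) := if (g : ℕ) = 0 then ⟨1, by omega⟩ else ⟨0, by omega⟩ with hv
          have hvs : (v : ℕ) < s := by
            rw [hv]; split <;> simp <;> omega
          have hvg : v ≠ g := by
            rw [hv]
            split
            · rename_i h0
              intro hc
              have := congrArg Fin.val hc
              simp at this
              omega
            · rename_i h0
              intro hc
              have := congrArg Fin.val hc
              simp at this
              omega
          have hvΔ : ({v} : Finset (Fin (s + r))) ∈ degreeComplex K (II K s r k) α := by
            constructor
            · rw [hg]
              simp [hvg, Ne.symm hvg]
            · refine xPow_notmem_X K α _ _ ?_ hby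
              intro i hi
              rcases Finset.mem_union.mp hi with h' | h'
              · rwa [Finset.mem_singleton.mp h']
              · rw [hg, Finset.mem_singleton] at h'
                rw [h']; exact hgs
          apply subsingleton_homology_of_ker_le_range
          intro zc _
          have hone : ∀ x : {Gg : Finset (Fin (s + r)) //
              Gg ∈ degreeComplex K (II K s r k) α ∧ Gg.card = 0},
              x = (⟨∅, hemp, Finset.card_empty⟩ : {Gg : Finset (Fin (s + r)) //
                Gg ∈ degreeComplex K (II K s r k) α ∧ Gg.card = 0}) :=
            fun x => Subtype.ext (Finset.card_eq_zero.mp x.2.2)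
          refine ⟨Finsupp.single ⟨{v}, hvΔ, Finset.card_singleton v⟩
            (zc ⟨∅, hemp, Finset.card_empty⟩), ?_⟩
          rw [bdry_single_vertex K _ v hvΔ (Finset.card_singleton v) _, dif_pos hemp]
          ext x
          rw [hone x, Finsupp.single_eq_same]
        · have hbx : ∑ i ∈ BXf s r, (α i).toNat < k := by
            by_contra hge
            push_neg at hge
            exact hnm (xPow_mem_II_of_y K α _ _ g
              (Finset.mem_union_right _ (by rw [hg]; exact Finset.mem_singleton_self g))
              hgs hge)
          set v : Fin (s + r) := if (g : ℕ) = s then ⟨s + 1, by omega⟩ else ⟨s, by omega⟩ with hv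
          have hvs : ¬ (v : ℕ) < s := by
            rw [hv]; split <;> simp
          have hvg : v ≠ g := by
            rw [hv]
            split
            · rename_i h0
              intro hc
              have := congrArg Fin.val hc
              simp at this
              omega
            · rename_i h0
              intro hc
              have := congrArg Fin.val hc
              simp at this
              omega
          have hvΔ : ({v} : Finset (Fin (s + r))) ∈ degreeComplex K (II K s r k) α := by
            constructor
            · rw [hg]
              simp [hvg, Ne.symm hvg]
            · refine xPow_notmem_Y K α _ _ ?_ hbx
              intro i hi
              rcases Finset.mem_union.mp hi with h' | h'
              · rwa [Finset.mem_singleton.mp h']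
              · rw [hg, Finset.mem_singleton] at h'
                rw [h']; exact hgs
          apply subsingleton_homology_of_ker_le_range
          intro zc _
          have hone : ∀ x : {Gg : Finset (Fin (s + r)) //
              Gg ∈ degreeComplex K (II K s r k) α ∧ Gg.card = 0},
              x = (⟨∅, hemp, Finset.card_empty⟩ : {Gg : Finset (Fin (s + r)) //
                Gg ∈ degreeComplex K (II K s r k) α ∧ Gg.card = 0}) :=
            fun x => Subtype.ext (Finset.card_eq_zero.mp x.2.2)
          refine ⟨Finsupp.single ⟨{v}, hvΔ, Finset.card_singleton v⟩
            (zc ⟨∅, hemp, Finset.card_empty⟩), ?_⟩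
          rw [bdry_single_vertex K _ v hvΔ (Finset.card_singleton v) _, dif_pos hemp]
          ext x
          rw [hone x, Finsupp.single_eq_same]
      · apply subsingleton_homology_of_subsingleton_chain
        apply subsingleton_chain_of_no_face
        rintro F ⟨hF, hc0⟩
        exact hemp (Finset.card_eq_zero.mp hc0 ▸ hF)
    · -- |G| = 0
      have hG : negSupp α = ∅ := Finset.card_eq_zero.mp hG0
      have hnonneg : ∀ i, 0 ≤ α i := by
        intro i
        by_contra hlt'
        push_neg at hlt'
        have hmemG : i ∈ negSupp α := by
          unfold negSupp
          simp [hlt']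
        rw [hG] at hmemG
        exact absurd hmemG (Finset.notMem_empty i)
      have hab : 2 * k - 1 ≤ ∑ i ∈ BXf s r, (α i).toNat + ∑ i ∈ BYf s r, (α i).toNat := by
        have h1 : ∑ i ∈ BXf s r, (α i).toNat + ∑ i ∈ BYf s r, (α i).toNat
            = ∑ i, (α i).toNat :=
          Finset.sum_filter_add_sum_filter_not Finset.univ _ _
        have h2 : ((∑ i, (α i).toNat : ℕ) : ℤ) = ∑ i, α i := by
          rw [Nat.cast_sum]
          exact Finset.sum_congr rfl (fun i _ => Int.toNat_of_nonneg (hnonneg i))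
        omega
      rw [hm1] at hnt
      refine (not_nontrivial_iff_subsingleton.mpr ?_) hnt
      by_cases hka : k ≤ ∑ i ∈ BXf s r, (α i).toNat
      · by_cases hkb : k ≤ ∑ i ∈ BYf s r, (α i).toNat
        · apply subsingleton_homology_of_subsingleton_chain
          apply subsingleton_chain_of_no_face
          rintro F ⟨hF, _⟩
          exact hF.2 (xPow_mem_II_of_both K α _ _ hka hkb)
        · push_neg at hkb
          have hΔiff : ∀ F : Finset (Fin (s + r)),
              F ∈ degreeComplex K (II K s r k) α ↔ F ⊆ BXf s r := by
            intro F
            constructor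
            · intro hF
              by_contra hns
              obtain ⟨w, hwF, hwns⟩ := Finset.not_subset.mp hns
              exact hF.2 (xPow_mem_II_of_y K α _ _ w (Finset.mem_union_left _ hwF)
                (fun hws => hwns (mem_BXf.mpr hws)) hka)
            · intro hFs
              refine ⟨by rw [hG]; exact Finset.disjoint_empty_right _, ?_⟩
              refine xPow_notmem_X K α _ _ ?_ hkb
              intro i hi
              rcases Finset.mem_union.mp hi with h' | h'
              · exact mem_BXf.mp (hFs h')
              · rw [hG] at h'
                exact absurd h' (Finset.notMem_empty i)
          apply subsingleton_homology_of_ker_le_range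
          exact fun z hz => simplex_ker_le_range K _ (BXf s r) x0 (mem_BXf.mpr hx0s) hΔiff z hz
      · push_neg at hka
        have hkb : k ≤ ∑ i ∈ BYf s r, (α i).toNat := by omega
        have hΔiff : ∀ F : Finset (Fin (s + r)),
            F ∈ degreeComplex K (II K s r k) α ↔ F ⊆ BYf s r := by
          intro F
          constructor
          · intro hF
            by_contra hns
            obtain ⟨w, hwF, hwns⟩ := Finset.not_subset.mp hns
            have hws : (w : ℕ) < s := by
              by_contra hc
              exact hwns (mem_BYf.mpr hc)
            exact hF.2 (xPow_mem_II_of_x K α _ _ w (Finset.mem_union_left _ hwF) hws hkb)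
          · intro hFs
            refine ⟨by rw [hG]; exact Finset.disjoint_empty_right _, ?_⟩
            refine xPow_notmem_Y K α _ _ ?_ hka
            intro i hi
            rcases Finset.mem_union.mp hi with h' | h'
            · exact mem_BYf.mp (hFs h')
            · rw [hG] at h'
              exact absurd h' (Finset.notMem_empty i)
        apply subsingleton_homology_of_ker_le_range
        exact fun z hz => simplex_ker_le_range K _ (BYf s r) y0 (mem_BYf.mpr hy0s) hΔiff z hz
  -- ===================== CONCLUSION =====================
  unfold aInvariant
  exact le_antisymm (csSup_le ⟨_, hmem⟩ hub) (le_csSup ⟨_, hub⟩ hmem)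
end

section
/- Let Δ be a k-dimensional simplicial complex on [s], I_Δ its Stanley-Reisner ideal, α ∈ ℕ^s, n ≥ 1, and F ⊆ [s] with |F| = k+1. Then F belongs to the degree complex Δ_α(I_Δ^n) if and only if F ∈ Δ and Σ_{i ∈ [s]∖F} α_i ≤ n − 1. -/
open MvPolynomial

variable (K : Type) [Field K] {N : ℕ}

/-! ### Auxiliary lemmas for Statement 13 -/

lemma negSupp_natCast (α : Fin N → ℕ) : negSupp (fun i => ((α i : ℕ) : ℤ)) = ∅ := by
  ext i
  simp only [negSupp, Finset.mem_filter, Finset.mem_univ, true_and, Finset.notMem_empty,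
    iff_false]
  omega

lemma varMonoid_le_nonZeroDivisors (W : Finset (Fin N)) :
    varMonoid K W ≤ nonZeroDivisors (MvPolynomial (Fin N) K) := by
  rw [varMonoid, Submonoid.closure_le]
  rintro _ ⟨i, -, rfl⟩
  exact mem_nonZeroDivisors_of_ne_zero (MvPolynomial.X_ne_zero i)

lemma algebraMap_mem_map_iff (W : Finset (Fin N)) (I : Ideal (MvPolynomial (Fin N) K))
    (z : MvPolynomial (Fin N) K) :
    algebraMap (MvPolynomial (Fin N) K) (Localization (varMonoid K W)) z ∈
      Ideal.map (algebraMap (MvPolynomial (Fin N) K) (Localization (varMonoid K W))) I ↔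
    ∃ m ∈ varMonoid K W, z * m ∈ I := by
  rw [IsLocalization.mem_map_algebraMap_iff (varMonoid K W)]
  constructor
  · rintro ⟨⟨a, m⟩, hx⟩
    refine ⟨m, m.2, ?_⟩
    have hinj := IsLocalization.injective (Localization (varMonoid K W))
      (varMonoid_le_nonZeroDivisors K W)
    have h2 : algebraMap (MvPolynomial (Fin N) K) (Localization (varMonoid K W)) (z * m) =
        algebraMap (MvPolynomial (Fin N) K) (Localization (varMonoid K W)) (a : _) := by
      rw [map_mul]; exact hx
    rw [hinj h2]
    exact a.2
  · rintro ⟨m, hm, h⟩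
    exact ⟨⟨⟨z * m, h⟩, ⟨m, hm⟩⟩, by rw [← map_mul]⟩

lemma mk'_one_denom (W : Finset (Fin N)) (p : MvPolynomial (Fin N) K) (hp : p ∈ varMonoid K W)
    (hp1 : p = 1) :
    IsLocalization.mk' (Localization (varMonoid K W)) (1 : MvPolynomial (Fin N) K)
      (⟨p, hp⟩ : varMonoid K W) = 1 := by
  subst hp1
  rw [show (⟨(1 : MvPolynomial (Fin N) K), hp⟩ : varMonoid K W) = 1 from rfl,
    IsLocalization.mk'_one, map_one]

lemma xPow_eq_algebraMap (β : Fin N → ℤ) (W : Finset (Fin N)) (h : negSupp β ⊆ W)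
    (hβ : negSupp β = ∅) :
    xPow K β W h = algebraMap (MvPolynomial (Fin N) K) (Localization (varMonoid K W))
      (∏ i, X i ^ (β i).toNat) := by
  rw [xPow, mk'_one_denom K W (∏ i ∈ negSupp β, X i ^ (-(β i)).toNat) _
    (by rw [hβ, Finset.prod_empty]), mul_one]

lemma prod_pow_mem_sr_pow (Δ : Set (Finset (Fin N))) (hΔ : DownClosed Δ) {k : ℕ}
    (hdim : ∀ G ∈ Δ, G.card ≤ k + 1) (F : Finset (Fin N)) (hF : F.card = k + 1)
    (hFΔ : F ∈ Δ) :
    ∀ (n : ℕ) (α : Fin N → ℕ), n ≤ ∑ i ∈ Fᶜ, α i →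
      (∏ i, X i ^ α i) * (∏ i ∈ F, X i) ^ n ∈ (stanleyReisner K Δ) ^ n := by
  classical
  have hgen : ∀ i ∉ F, (X i * ∏ j ∈ F, X j : MvPolynomial (Fin N) K) ∈ stanleyReisner K Δ := by
    intro i hi
    have hnot : insert i F ∉ Δ := by
      intro hmem
      have := hdim _ hmem
      rw [Finset.card_insert_of_notMem hi, hF] at this
      omega
    rw [show (X i * ∏ j ∈ F, X j : MvPolynomial (Fin N) K) = ∏ j ∈ insert i F, X j from
      (Finset.prod_insert hi).symm]
    exact Ideal.subset_span ⟨insert i F, hnot, rfl⟩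
  intro n
  induction n with
  | zero => intro α _; simp [Ideal.one_eq_top]
  | succ n ih =>
    intro α hα
    obtain ⟨i, hiF, hi⟩ : ∃ i ∈ Fᶜ, α i ≠ 0 := by
      by_contra hcon
      push_neg at hcon
      have : ∑ i ∈ Fᶜ, α i = 0 := Finset.sum_eq_zero hcon
      omega
    have hiF' : i ∉ F := Finset.mem_compl.mp hiF
    set α' := Function.update α i (α i - 1) with hα'def
    have h1 : (∏ j, X j ^ α' j : MvPolynomial (Fin N) K) =
        X i ^ (α i - 1) * ∏ j ∈ Finset.univ.erase i, X j ^ α j := by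
      rw [← Finset.mul_prod_erase Finset.univ (fun j => X j ^ α' j) (Finset.mem_univ i)]
      congr 1
      · rw [hα'def, Function.update_self]
      · exact Finset.prod_congr rfl fun j hj => by
          rw [hα'def, Function.update_of_ne (Finset.ne_of_mem_erase hj)]
    have hsplit : (∏ j, X j ^ α j : MvPolynomial (Fin N) K) = X i * ∏ j, X j ^ α' j := by
      rw [h1, ← mul_assoc, ← pow_succ', Nat.sub_add_cancel (Nat.one_le_iff_ne_zero.mpr hi),
        Finset.mul_prod_erase Finset.univ (fun j => X j ^ α j) (Finset.mem_univ i)]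
    have hα'sum : n ≤ ∑ j ∈ Fᶜ, α' j := by
      rw [hα'def, Finset.sum_update_of_mem hiF]
      have h2 : ∑ j ∈ Fᶜ, α j = α i + ∑ j ∈ Fᶜ \ {i}, α j := by
        rw [Finset.sdiff_singleton_eq_erase]
        exact (Finset.add_sum_erase _ _ hiF).symm
      omega
    have hstep : (∏ j, X j ^ α j : MvPolynomial (Fin N) K) * (∏ j ∈ F, X j) ^ (n + 1) =
        (X i * ∏ j ∈ F, X j) * ((∏ j, X j ^ α' j) * (∏ j ∈ F, X j) ^ n) := by
      rw [hsplit]; ring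
    rw [hstep, show (stanleyReisner K Δ) ^ (n + 1) =
      stanleyReisner K Δ * (stanleyReisner K Δ) ^ n from by rw [pow_succ, mul_comm]]
    exact Ideal.mul_mem_mul (hgen i hiF') (ih α' hα'sum)

/-- Let `Δ` be a `k`-dimensional simplicial complex on `[s]`, `I_Δ` its
Stanley–Reisner ideal, `α ∈ ℕ^s`, `n ≥ 1`, and `F ⊆ [s]` with `|F| = k+1`. Then `F` belongs
to the degree complex `Δ_α(I_Δ^n)` iff `F ∈ Δ` and `∑_{i ∈ [s]∖F} α_i ≤ n − 1`. -/
theorem mem_degreeComplex_pow_iff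
    (Δ : Set (Finset (Fin N))) (hΔ : DownClosed Δ) (k : ℕ)
    (hdim : ∀ G ∈ Δ, G.card ≤ k + 1) (hex : ∃ G ∈ Δ, G.card = k + 1)
    (α : Fin N → ℕ) (n : ℕ) (hn : 1 ≤ n)
    (F : Finset (Fin N)) (hF : F.card = k + 1) :
    F ∈ degreeComplex K ((stanleyReisner K Δ) ^ n) (fun i => (α i : ℤ)) ↔
      F ∈ Δ ∧ (∑ i ∈ Fᶜ, (α i : ℤ)) ≤ (n : ℤ) - 1 := by
    classical
  simp only [degreeComplex, Set.mem_setOf_eq]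
  rw [xPow_eq_algebraMap K _ _ _ (negSupp_natCast α), algebraMap_mem_map_iff]
  simp only [negSupp_natCast α, Finset.union_empty, Finset.disjoint_empty_right, true_and,
    Int.toNat_natCast]
  constructor
  · intro hnot
    by_contra hrhs
    apply hnot
    have hxFvar : (∏ i ∈ F, X i : MvPolynomial (Fin N) K) ^ n ∈ varMonoid K F := by
      unfold varMonoid
      exact pow_mem (prod_mem fun i hi =>
        Submonoid.subset_closure (Set.mem_image_of_mem _ (Finset.mem_coe.mpr hi))) n
    refine ⟨(∏ i ∈ F, X i) ^ n, hxFvar, ?_⟩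
    by_cases hFΔ : F ∈ Δ
    · have h1 : ¬ (∑ i ∈ Fᶜ, (α i : ℤ)) ≤ (n : ℤ) - 1 := fun hs => hrhs ⟨hFΔ, hs⟩
      have h2 : n ≤ ∑ i ∈ Fᶜ, α i := by
        rw [← Nat.cast_sum] at h1; omega
      exact prod_pow_mem_sr_pow K Δ hΔ hdim F hF hFΔ n α h2
    · have hxFI : (∏ i ∈ F, X i : MvPolynomial (Fin N) K) ∈ stanleyReisner K Δ := by
        unfold stanleyReisner
        exact Ideal.subset_span ⟨F, hFΔ, rfl⟩
      exact Ideal.mul_mem_left _ _ (Ideal.pow_mem_pow hxFI n)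
  · rintro ⟨hFΔ, hsum⟩ ⟨m, hm, hmem⟩
    have hs : ∑ i ∈ Fᶜ, α i < n := by
      rw [← Nat.cast_sum] at hsum; omega
    have hIP : stanleyReisner K Δ ≤ facePrime K F := by
      rw [stanleyReisner, Ideal.span_le]
      rintro _ ⟨G, hG, rfl⟩
      obtain ⟨i, hiG, hiF⟩ : ∃ i ∈ G, i ∉ F := by
        by_contra hcon
        push_neg at hcon
        exact hG (hΔ F hFΔ G (Finset.subset_iff.mpr hcon))
      rw [SetLike.mem_coe, ← Finset.mul_prod_erase G _ hiG]
      exact Ideal.mul_mem_right _ _ (Ideal.subset_span ⟨i, hiF, rfl⟩)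
    have hmemP : (∏ i, X i ^ α i) * m ∈ facePrime K F ^ n :=
      Ideal.pow_right_mono hIP n hmem
    let ψ : MvPolynomial (Fin N) K →ₐ[K] Polynomial K :=
      aeval (fun i : Fin N => if i ∈ F then (1 : Polynomial K) else Polynomial.X)
    have hψX : ∀ i : Fin N, ψ (X i) = if i ∈ F then 1 else Polynomial.X := fun i => aeval_X _ i
    have hm' : m ∈ Submonoid.closure ((fun i => (X i : MvPolynomial (Fin N) K)) '' ↑F) := hm
    have hψm : ψ m = 1 := by
      refine Submonoid.closure_induction (fun x hx => ?_) (map_one ψ)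
        (fun x y _ _ hx hy => by rw [map_mul, hx, hy, one_mul]) hm'
      obtain ⟨i, hi, rfl⟩ := hx
      rw [hψX i, if_pos (Finset.mem_coe.mp hi)]
    have hψα : ψ (∏ i, X i ^ α i) = Polynomial.X ^ (∑ i ∈ Fᶜ, α i) := by
      rw [map_prod, ← Finset.prod_mul_prod_compl F (fun i => ψ (X i ^ α i))]
      have h1 : ∏ i ∈ F, ψ (X i ^ α i) = 1 :=
        Finset.prod_eq_one fun i hi => by rw [map_pow, hψX i, if_pos hi, one_pow]
      have h2 : ∏ i ∈ Fᶜ, ψ (X i ^ α i) = Polynomial.X ^ ∑ i ∈ Fᶜ, α i := by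
        rw [show ∏ i ∈ Fᶜ, ψ (X i ^ α i) = ∏ i ∈ Fᶜ, Polynomial.X ^ α i from
          Finset.prod_congr rfl fun i hi => by
            rw [map_pow, hψX i, if_neg (Finset.mem_compl.mp hi)]]
        exact Finset.prod_pow_eq_pow_sum _ _ _
      rw [h1, h2, one_mul]
    have h3 : Ideal.map ψ (facePrime K F ^ n) ≤ Ideal.span {Polynomial.X ^ n} := by
      rw [Ideal.map_pow, ← Ideal.span_singleton_pow]
      refine Ideal.pow_right_mono ?_ n
      rw [facePrime, Ideal.map_span, Ideal.span_le]
      rintro _ ⟨_, ⟨i, hiF2, rfl⟩, rfl⟩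
      rw [SetLike.mem_coe, hψX i, if_neg hiF2]
      exact Ideal.subset_span rfl
    have h4 := Ideal.mem_map_of_mem ψ hmemP
    rw [map_mul, hψm, mul_one, hψα] at h4
    have h5 := h3 h4
    rw [Ideal.mem_span_singleton] at h5
    have h6 := Polynomial.natDegree_le_of_dvd h5 (pow_ne_zero _ Polynomial.X_ne_zero)
    rw [Polynomial.natDegree_pow, Polynomial.natDegree_pow, Polynomial.natDegree_X,
      mul_one, mul_one] at h6
    omega
end

section
/- Let Δ be a k-dimensional simplicial complex on [s] and suppose G_α ∈ Δ for α ∈ ℤ^s. Then the facets of the degree complex of the symbolic power are given by F(Δ_α(I_Δ^{(n)})) = { F ∈ F(link_Δ(G_α)) : Σ_{i ∉ F ∪ G_α} α_i ≤ n − 1 }. -/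
open MvPolynomial

variable (K : Type) [Field K] {N : ℕ}

section Aux

lemma monomial_mem_facePrime_pow (F' : Finset (Fin N)) (n : ℕ) (β : Fin N → ℕ)
    (h : n ≤ ∑ i ∈ F'ᶜ, β i) :
    (∏ i, X i ^ β i : MvPolynomial (Fin N) K) ∈ facePrime K F' ^ n := by
  rw [← Finset.prod_mul_prod_compl F' (fun i => (X i ^ β i : MvPolynomial (Fin N) K))]
  refine Ideal.mul_mem_left _ _ ?_
  refine SetLike.le_def.mp (Ideal.pow_le_pow_right h) ?_
  rw [← Finset.prod_pow_eq_pow_sum]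
  have hX : ∀ i ∈ F'ᶜ, (X i : MvPolynomial (Fin N) K) ∈ facePrime K F' := by
    intro i hi
    rw [facePrime]
    exact Ideal.subset_span ⟨i, Finset.mem_compl.mp hi, rfl⟩
  exact Ideal.prod_mem_prod (fun i hi => Ideal.pow_mem_pow (hX i hi) _)

/-- The ring map collapsing the variables in `F'` to `1` and all others to a single
polynomial variable. -/
noncomputable def collapse (F' : Finset (Fin N)) :
    MvPolynomial (Fin N) K →+* Polynomial K :=
  (MvPolynomial.aeval (fun i => if i ∈ F' then 1 else Polynomial.X)).toRingHom

lemma collapse_varMonoid {W F' : Finset (Fin N)} (hWF : W ⊆ F') {m : MvPolynomial (Fin N) K}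
    (hm : m ∈ varMonoid K W) : collapse K F' m = 1 := by
  rw [varMonoid] at hm
  induction hm using Submonoid.closure_induction with
  | mem x hx =>
    obtain ⟨i, hi, rfl⟩ := hx
    simp [collapse, hWF (Finset.mem_coe.mp hi)]
  | one => simp
  | mul x y _ _ hx hy => rw [map_mul, hx, hy, mul_one]

lemma collapse_monomial (F' : Finset (Fin N)) (β : Fin N → ℕ) :
    collapse K F' (∏ i, X i ^ β i) = Polynomial.X ^ (∑ i ∈ F'ᶜ, β i) := by
  have h1 : ∀ i ∈ F', (collapse K F') (X i ^ β i) = 1 := by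
    intro i hi; rw [map_pow]; simp [collapse, hi]
  have h2 : ∀ i ∈ F'ᶜ, (collapse K F') (X i ^ β i) = Polynomial.X ^ β i := by
    intro i hi; rw [map_pow]; simp [collapse, Finset.mem_compl.mp hi]
  rw [map_prod, ← Finset.prod_mul_prod_compl F', Finset.prod_congr rfl h1,
    Finset.prod_congr rfl h2, Finset.prod_const_one, one_mul,
    Finset.prod_pow_eq_pow_sum]

lemma dvd_collapse_of_mem_pow (F' : Finset (Fin N)) (n : ℕ) {p : MvPolynomial (Fin N) K}
    (hp : p ∈ facePrime K F' ^ n) : Polynomial.X ^ n ∣ collapse K F' p := by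
  have h1 : Ideal.map (collapse K F') (facePrime K F') ≤ Ideal.span {Polynomial.X} := by
    rw [facePrime, Ideal.map_span, Ideal.span_le]
    rintro _ ⟨_, ⟨i, hi, rfl⟩, rfl⟩
    have hx : collapse K F' (X i) = Polynomial.X := by simp [collapse, hi]
    rw [hx]
    exact Ideal.subset_span rfl
  have h2 : collapse K F' p ∈ Ideal.span {Polynomial.X} ^ n := by
    have h3 := Ideal.mem_map_of_mem (collapse K F') hp
    rw [Ideal.map_pow] at h3
    exact Ideal.pow_right_mono h1 n h3
  rwa [Ideal.span_singleton_pow, Ideal.mem_span_singleton] at h2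

lemma xPow_mul_den (α : Fin N → ℤ) (W : Finset (Fin N)) (h : negSupp α ⊆ W) :
    xPow K α W h * algebraMap (MvPolynomial (Fin N) K) (Localization (varMonoid K W))
      (∏ i ∈ negSupp α, X i ^ (-(α i)).toNat) =
    algebraMap (MvPolynomial (Fin N) K) (Localization (varMonoid K W))
      (∏ i, X i ^ (α i).toNat) := by
  rw [xPow, mul_assoc, IsLocalization.mk'_spec, map_one, mul_one]

lemma xPow_mem_map_iff (Δ : Set (Finset (Fin N))) (n : ℕ) (α : Fin N → ℤ)
    (W : Finset (Fin N)) (h : negSupp α ⊆ W) :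
    xPow K α W h ∈ Ideal.map (algebraMap (MvPolynomial (Fin N) K)
        (Localization (varMonoid K W))) (symbolicPowerSR K Δ n) ↔
    ∀ F' ∈ facets Δ, W ⊆ F' → (n : ℤ) ≤ ∑ i ∈ F'ᶜ, α i := by
  classical
  set S := MvPolynomial (Fin N) K
  set L := Localization (varMonoid K W)
  set φ := algebraMap S L with hφ
  set num : S := ∏ i, X i ^ (α i).toNat with hnum
  set den : S := ∏ i ∈ negSupp α, X i ^ (-(α i)).toNat with hden
  have hdenM : den ∈ varMonoid K W :=
    Submonoid.prod_mem _ (fun i hi =>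
      pow_mem (Submonoid.subset_closure
        (Set.mem_image_of_mem _ (Finset.mem_coe.mpr (h hi)))) _)
  have hsum : ∀ F' : Finset (Fin N), W ⊆ F' →
      ∑ i ∈ F'ᶜ, α i = ((∑ i ∈ F'ᶜ, (α i).toNat : ℕ) : ℤ) := by
    intro F' hWF'
    rw [Nat.cast_sum]
    refine Finset.sum_congr rfl (fun i hi => ?_)
    have hiW : i ∉ negSupp α := fun hc => Finset.mem_compl.mp hi (hWF' (h hc))
    have : 0 ≤ α i := by
      by_contra hc
      exact hiW (Finset.mem_filter.mpr ⟨Finset.mem_univ i, by omega⟩)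
    rw [Int.toNat_of_nonneg this]
  constructor
  · intro hmem F' hF' hWF'
    have hle : symbolicPowerSR K Δ n ≤ facePrime K F' ^ n := by
      rw [symbolicPowerSR]; exact iInf₂_le F' hF'
    have h1 : xPow K α W h * φ den ∈ Ideal.map φ (facePrime K F' ^ n) :=
      Ideal.mul_mem_right _ _ (Ideal.map_mono hle hmem)
    rw [xPow_mul_den] at h1
    obtain ⟨⟨p, m⟩, hpm⟩ := (IsLocalization.mem_map_algebraMap_iff (varMonoid K W) L).mp h1
    rw [← map_mul] at hpm
    have heq : num * (m : S) = (p : S) :=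
      IsLocalization.injective L (varMonoid_le_nonZeroDivisors K W) hpm
    have hdvd : (Polynomial.X : Polynomial K) ^ n ∣ (Polynomial.X : Polynomial K) ^ (∑ i ∈ F'ᶜ, (α i).toNat) := by
      have := dvd_collapse_of_mem_pow K F' n p.2
      rw [← heq, map_mul, collapse_varMonoid K hWF' m.2, mul_one, collapse_monomial] at this
      exact this
    have hn' : n ≤ ∑ i ∈ F'ᶜ, (α i).toNat :=
      (pow_dvd_pow_iff Polynomial.X_ne_zero Polynomial.not_isUnit_X).mp hdvd
    rw [hsum F' hWF']
    exact_mod_cast hn'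
  · intro hall
    set m : S := ∏ i ∈ W, X i ^ n with hm
    have hmM : m ∈ varMonoid K W :=
      Submonoid.prod_mem _ (fun i hi =>
        pow_mem (Submonoid.subset_closure
          (Set.mem_image_of_mem _ (Finset.mem_coe.mpr hi))) _)
    set γ : Fin N → ℕ := fun i => (α i).toNat + (if i ∈ W then n else 0) with hγ
    have hprod : num * m = ∏ i, X i ^ γ i := by
      simp only [hγ]
      simp_rw [pow_add]
      rw [Finset.prod_mul_distrib, hnum, hm]
      congr 1
      calc (∏ i ∈ W, (X i : S) ^ n)
          = ∏ i ∈ W, X i ^ (if i ∈ W then n else 0) :=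
            Finset.prod_congr rfl (fun i hi => by rw [if_pos hi])
        _ = ∏ i, X i ^ (if i ∈ W then n else 0) :=
            Finset.prod_subset (Finset.subset_univ W)
              (fun i _ hiW => by rw [if_neg hiW, pow_zero])
    have hnumm : num * m ∈ symbolicPowerSR K Δ n := by
      rw [symbolicPowerSR]
      refine (Submodule.mem_iInf _).mpr (fun F' => (Submodule.mem_iInf _).mpr (fun hF' => ?_))
      rw [hprod]
      refine monomial_mem_facePrime_pow K F' n γ ?_
      by_cases hWF' : W ⊆ F'
      · have h1 := hall F' hF' hWF'
        rw [hsum F' hWF'] at h1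
        have h2 : n ≤ ∑ i ∈ F'ᶜ, (α i).toNat := by exact_mod_cast h1
        exact le_trans h2 (Finset.sum_le_sum (fun i _ => Nat.le_add_right _ _))
      · obtain ⟨j, hjW, hjF'⟩ := Finset.not_subset.mp hWF'
        have h1 : n ≤ γ j := by simp [hγ, hjW]
        exact le_trans h1 (Finset.single_le_sum (f := γ) (fun i _ => Nat.zero_le _)
          (Finset.mem_compl.mpr hjF'))
    have hu : IsUnit (φ (den * m)) :=
      IsLocalization.map_units L (⟨den * m, mul_mem hdenM hmM⟩ : varMonoid K W)
    have key : xPow K α W h * φ (den * m) = φ (num * m) := by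
      rw [map_mul, ← mul_assoc, xPow_mul_den, ← map_mul]
    have hxp : xPow K α W h = φ (num * m) * ↑hu.unit⁻¹ := by
      rw [Units.eq_mul_inv_iff_mul_eq, hu.unit_spec]
      exact key
    rw [hxp]
    exact Ideal.mul_mem_right _ _ (Ideal.mem_map_of_mem φ hnumm)

lemma exists_facet (Δ : Set (Finset (Fin N))) {G : Finset (Fin N)} (hG : G ∈ Δ) :
    ∃ F' ∈ facets Δ, G ⊆ F' := by
  classical
  obtain ⟨F', hF'mem, hmax⟩ := Finset.exists_max_image
    (Finset.univ.filter (fun H => H ∈ Δ ∧ G ⊆ H)) Finset.card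
    ⟨G, by simp [hG]⟩
  simp only [Finset.mem_filter, Finset.mem_univ, true_and] at hF'mem
  refine ⟨F', ⟨hF'mem.1, fun H hH hFH => ?_⟩, hF'mem.2⟩
  refine Finset.eq_of_subset_of_card_le hFH (hmax H ?_)
  simp only [Finset.mem_filter, Finset.mem_univ, true_and]
  exact ⟨hH, hF'mem.2.trans hFH⟩

lemma mem_facets_link_iff (Δ : Set (Finset (Fin N))) {G : Finset (Fin N)}
    (F : Finset (Fin N)) :
    F ∈ facets (link Δ G) ↔ Disjoint F G ∧ F ∪ G ∈ facets Δ := by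
  classical
  constructor
  · rintro ⟨⟨hdisj, hFG⟩, hmax⟩
    obtain ⟨F', hF'fac, hsub⟩ := exists_facet Δ hFG
    have hGF' : G ⊆ F' := (Finset.subset_union_right).trans hsub
    have hlink : F' \ G ∈ link Δ G :=
      ⟨Finset.sdiff_disjoint, by rw [Finset.sdiff_union_of_subset hGF']; exact hF'fac.1⟩
    have hFsub : F ⊆ F' \ G :=
      Finset.subset_sdiff.mpr ⟨(Finset.subset_union_left).trans hsub, hdisj⟩
    have hFeq : F = F' \ G := hmax _ hlink hFsub
    have : F ∪ G = F' := by rw [hFeq, Finset.sdiff_union_of_subset hGF']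
    exact ⟨hdisj, this ▸ hF'fac⟩
  · rintro ⟨hdisj, hfac⟩
    refine ⟨⟨hdisj, hfac.1⟩, fun F'' hF'' hsub => ?_⟩
    have h1 : F ∪ G = F'' ∪ G :=
      hfac.2 _ hF''.2 (Finset.union_subset_union_left hsub)
    have h2 : F'' ⊆ F := by
      intro x hx
      have : x ∈ F ∪ G := h1 ▸ Finset.mem_union_left _ hx
      rcases Finset.mem_union.mp this with h | h
      · exact h
      · exact absurd (hF''.1.le_bot (by simp [hx, h] : x ∈ F'' ⊓ G)) (by simp)
    exact Finset.Subset.antisymm hsub h2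

end Aux

/-- Let `Δ` be a `k`-dimensional simplicial complex on `[s]` and suppose
`G_α ∈ Δ` for `α ∈ ℤ^s`. Then the facets of the degree complex of the symbolic power are
`F(Δ_α(I_Δ^{(n)})) = {F ∈ F(link_Δ(G_α)) : ∑_{i ∉ F ∪ G_α} α_i ≤ n − 1}`. -/
theorem facets_degreeComplex_symbolicPower
    (Δ : Set (Finset (Fin N))) (hΔ : DownClosed Δ) (k : ℕ)
    (hdim : ∀ G ∈ Δ, G.card ≤ k + 1) (hex : ∃ G ∈ Δ, G.card = k + 1)
    (n : ℕ) (hn : 1 ≤ n) (α : Fin N → ℤ) (hG : negSupp α ∈ Δ) :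
    facets (degreeComplex K (symbolicPowerSR K Δ n) α) =
      {F | F ∈ facets (link Δ (negSupp α)) ∧
        (∑ i ∈ (F ∪ negSupp α)ᶜ, α i) ≤ (n : ℤ) - 1} := by
  classical
  set G := negSupp α with hGdef
  have hmemΔα : ∀ F : Finset (Fin N), F ∈ degreeComplex K (symbolicPowerSR K Δ n) α ↔
      (Disjoint F G ∧ ∃ F' ∈ facets Δ, F ∪ G ⊆ F' ∧ (∑ i ∈ F'ᶜ, α i) ≤ (n : ℤ) - 1) := by
    intro F
    rw [degreeComplex, Set.mem_setOf_eq, and_congr_right_iff]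
    intro _
    rw [xPow_mem_map_iff K Δ n α (F ∪ G) Finset.subset_union_right |>.not]
    push_neg
    constructor
    · rintro ⟨F', hF', hsub, hlt⟩
      exact ⟨F', hF', hsub, by omega⟩
    · rintro ⟨F', hF', hsub, hle⟩
      exact ⟨F', hF', hsub, by omega⟩
  ext F
  simp only [Set.mem_setOf_eq, mem_facets_link_iff]
  constructor
  · rintro ⟨hF, hmax⟩
    obtain ⟨hdisj, F₁, hF₁fac, hsub, hsum⟩ := (hmemΔα F).mp hF
    have hGF₁ : G ⊆ F₁ := (Finset.subset_union_right).trans hsub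
    have hmem₁ : F₁ \ G ∈ degreeComplex K (symbolicPowerSR K Δ n) α := by
      refine (hmemΔα _).mpr ⟨Finset.sdiff_disjoint, F₁, hF₁fac, ?_, hsum⟩
      rw [Finset.sdiff_union_of_subset hGF₁]
    have hFsub : F ⊆ F₁ \ G :=
      Finset.subset_sdiff.mpr ⟨(Finset.subset_union_left).trans hsub, hdisj⟩
    have hFeq : F = F₁ \ G := hmax _ hmem₁ hFsub
    have hFG : F ∪ G = F₁ := by rw [hFeq, Finset.sdiff_union_of_subset hGF₁]
    exact ⟨⟨hdisj, hFG ▸ hF₁fac⟩, by rw [hFG]; exact hsum⟩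
  · rintro ⟨⟨hdisj, hfac⟩, hsum⟩
    have hF : F ∈ degreeComplex K (symbolicPowerSR K Δ n) α :=
      (hmemΔα F).mpr ⟨hdisj, F ∪ G, hfac, Finset.Subset.refl _, hsum⟩
    refine ⟨hF, fun F'' hF'' hsub => ?_⟩
    obtain ⟨hdisj'', F₂, hF₂fac, hsub₂, _⟩ := (hmemΔα F'').mp hF''
    have h1 : F ∪ G = F₂ :=
      hfac.2 _ hF₂fac.1 ((Finset.union_subset_union_left hsub).trans hsub₂)
    have h2 : F'' ⊆ F := by
      intro x hx
      have : x ∈ F ∪ G := by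
        rw [h1]
        exact hsub₂ (Finset.mem_union_left _ hx)
      rcases Finset.mem_union.mp this with h | h
      · exact h
      · exact absurd (hdisj''.le_bot (by simp [hx, h] : x ∈ F'' ⊓ G)) (by simp)
    exact Finset.Subset.antisymm hsub h2
end

section
/- Let Δ be a k-dimensional simplicial complex on [s] and α ∈ ℤ^s with G_α ∈ Δ. Then the pure k-th skeletons of the degree complexes of the ordinary and symbolic powers agree: Δ_α(I_Δ^n)^{(k)} = Δ_α(I_Δ^{(n)})^{(k)} for all n ≥ 1, where Γ^{(k)} denotes the subcomplex generated by the k-dimensional faces of Γ. -/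
open MvPolynomial

variable (K : Type) [Field K] {N : ℕ}

section Aux

variable {K}

/-- A product of variables with indices in `W` becomes a unit in the localization. -/
lemma isUnit_prodX (W T : Finset (Fin N)) (hT : T ⊆ W) :
    IsUnit (algebraMap (MvPolynomial (Fin N) K) (Localization (varMonoid K W))
      (∏ i ∈ T, X i)) := by
  have hmem : (∏ i ∈ T, X i) ∈ varMonoid K W :=
    Submonoid.prod_mem _ (fun i hi => Submonoid.subset_closure
      (Set.mem_image_of_mem _ (Finset.mem_coe.mpr (hT hi))))
  exact IsLocalization.map_units _ (⟨_, hmem⟩ : varMonoid K W)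

lemma prodX_mem_SR {Δ : Set (Finset (Fin N))} {F : Finset (Fin N)} (h : F ∉ Δ) :
    (∏ i ∈ F, X i) ∈ stanleyReisner K Δ :=
  Ideal.subset_span ⟨F, h, rfl⟩

lemma SR_le_facePrime {Δ : Set (Finset (Fin N))} (hΔ : DownClosed Δ)
    {G : Finset (Fin N)} (hG : G ∈ Δ) :
    stanleyReisner K Δ ≤ facePrime K G := by
  rw [stanleyReisner, Ideal.span_le]
  rintro f ⟨F, hF, rfl⟩
  have hns : ¬ F ⊆ G := fun hsub => hF (hΔ G hG F hsub)
  obtain ⟨i, hiF, hiG⟩ := Finset.not_subset.mp hns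
  rw [← Finset.mul_prod_erase F _ hiF]
  exact Ideal.mul_mem_right _ _ (Ideal.subset_span ⟨i, hiG, rfl⟩)

lemma pow_le_symbolic {Δ : Set (Finset (Fin N))} (hΔ : DownClosed Δ) (n : ℕ) :
    (stanleyReisner K Δ) ^ n ≤ symbolicPowerSR K Δ n :=
  le_iInf₂ fun _ hF => Ideal.pow_right_mono (SR_le_facePrime hΔ hF.1) n

/-- If `W ⊉`-maximality fails, i.e. `W ∉ Δ`, then the extension of `I_Δ^n` is the whole ring. -/
lemma map_eq_top_of_not_mem {Δ : Set (Finset (Fin N))} {T W : Finset (Fin N)}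
    (hTW : T ⊆ W) (hT : T ∉ Δ) (n : ℕ) :
    Ideal.map (algebraMap (MvPolynomial (Fin N) K) (Localization (varMonoid K W)))
      ((stanleyReisner K Δ) ^ n) = ⊤ := by
  apply Ideal.eq_top_of_isUnit_mem _
    (Ideal.mem_map_of_mem _ (Ideal.pow_mem_pow (prodX_mem_SR hT) n))
  rw [map_pow]
  exact (isUnit_prodX W T hTW).pow n

/-- Over the localization at a facet `W` of a `k`-dimensional complex,
the extension of `P_W` is contained in the extension of `I_Δ`. -/
lemma map_facePrime_le {Δ : Set (Finset (Fin N))} {k : ℕ}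
    (hdim : ∀ G ∈ Δ, G.card ≤ k + 1) {W : Finset (Fin N)} (hWcard : W.card = k + 1) :
    Ideal.map (algebraMap (MvPolynomial (Fin N) K) (Localization (varMonoid K W)))
        (facePrime K W) ≤
      Ideal.map (algebraMap (MvPolynomial (Fin N) K) (Localization (varMonoid K W)))
        (stanleyReisner K Δ) := by
  rw [facePrime, Ideal.map_span, Ideal.span_le]
  rintro f ⟨g, ⟨i, hiW, rfl⟩, rfl⟩
  have hnot : insert i W ∉ Δ := by
    intro hmem
    have := hdim _ hmem
    rw [Finset.card_insert_of_notMem hiW, hWcard] at this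
    omega
  have hmem : algebraMap (MvPolynomial (Fin N) K) (Localization (varMonoid K W))
      (∏ j ∈ insert i W, X j) ∈
      Ideal.map (algebraMap (MvPolynomial (Fin N) K) (Localization (varMonoid K W)))
        (stanleyReisner K Δ) :=
    Ideal.mem_map_of_mem _ (prodX_mem_SR hnot)
  rw [Finset.prod_insert hiW, map_mul] at hmem
  obtain ⟨u, hu⟩ := isUnit_prodX (K := K) W W subset_rfl
  have : algebraMap (MvPolynomial (Fin N) K) (Localization (varMonoid K W)) (X i)
      = (algebraMap (MvPolynomial (Fin N) K) (Localization (varMonoid K W)) (X i) *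
          algebraMap (MvPolynomial (Fin N) K) (Localization (varMonoid K W))
            (∏ j ∈ W, X j)) * ↑u⁻¹ := by
    rw [← hu, mul_assoc, Units.mul_inv, mul_one]
  rw [this]
  exact Ideal.mul_mem_right _ _ hmem

end Aux

/-- Let `Δ` be a `k`-dimensional simplicial complex on `[s]` and `α ∈ ℤ^s`
with `G_α ∈ Δ`. Then the pure `k`-th skeletons of the degree complexes of the ordinary and
symbolic powers agree: `Δ_α(I_Δ^n)^{(k)} = Δ_α(I_Δ^{(n)})^{(k)}` for all `n ≥ 1`. -/
theorem pureSkeleton_degreeComplex_pow_eq_symbolic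
    (Δ : Set (Finset (Fin N))) (hΔ : DownClosed Δ) (k : ℕ)
    (hdim : ∀ G ∈ Δ, G.card ≤ k + 1) (hex : ∃ G ∈ Δ, G.card = k + 1)
    (n : ℕ) (hn : 1 ≤ n) (α : Fin N → ℤ) (hG : negSupp α ∈ Δ) :
    pureSkeleton (degreeComplex K ((stanleyReisner K Δ) ^ n) α) k =
      pureSkeleton (degreeComplex K (symbolicPowerSR K Δ n) α) k := by
  classical
  set I := (stanleyReisner K Δ) ^ n with hI
  set J := symbolicPowerSR K Δ n with hJ
  ext F
  constructor
  · rintro ⟨G, ⟨hdisj, hnot⟩, hcardG, hFG⟩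
    set W := G ∪ negSupp α with hWdef
    -- W ∈ Δ
    have hWΔ : W ∈ Δ := by
      by_contra hW
      exact hnot (by rw [map_eq_top_of_not_mem (subset_refl W) hW n]; trivial)
    have hWG : G = W := Finset.eq_of_subset_of_card_le Finset.subset_union_left
      (by rw [hcardG]; exact hdim _ hWΔ)
    have hWcard : W.card = k + 1 := hWG ▸ hcardG
    -- W is a facet
    have hWfacet : W ∈ facets Δ :=
      ⟨hWΔ, fun H hH hsub => Finset.eq_of_subset_of_card_le hsub
        (by rw [hWcard]; exact hdim _ hH)⟩
    -- symbolic power maps into the map of I^n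
    have hle : Ideal.map (algebraMap (MvPolynomial (Fin N) K)
          (Localization (varMonoid K W))) J ≤
        Ideal.map (algebraMap (MvPolynomial (Fin N) K)
          (Localization (varMonoid K W))) I := by
      calc Ideal.map (algebraMap (MvPolynomial (Fin N) K)
            (Localization (varMonoid K W))) J
          ≤ Ideal.map (algebraMap (MvPolynomial (Fin N) K)
            (Localization (varMonoid K W))) ((facePrime K W) ^ n) :=
            Ideal.map_mono (iInf₂_le W hWfacet)
        _ = (Ideal.map (algebraMap (MvPolynomial (Fin N) K)
            (Localization (varMonoid K W))) (facePrime K W)) ^ n := Ideal.map_pow _ _ _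
        _ ≤ (Ideal.map (algebraMap (MvPolynomial (Fin N) K)
            (Localization (varMonoid K W))) (stanleyReisner K Δ)) ^ n :=
            Ideal.pow_right_mono (map_facePrime_le hdim hWcard) n
        _ = Ideal.map (algebraMap (MvPolynomial (Fin N) K)
            (Localization (varMonoid K W))) I := (Ideal.map_pow _ _ _).symm
    exact ⟨G, ⟨hdisj, fun hmem => hnot (hle hmem)⟩, hcardG, hFG⟩
  · rintro ⟨G, ⟨hdisj, hnot⟩, hcardG, hFG⟩
    refine ⟨G, ⟨hdisj, fun hmem => hnot ?_⟩, hcardG, hFG⟩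
    exact Ideal.map_mono (pow_le_symbolic hΔ n) hmem
end

section
/- Let Δ be a k-dimensional simplicial complex on [s], I_Δ its Stanley-Reisner ideal in S = K[x_1,…,x_s]. Then for every positive integer n, a_{k+1}(S/I_Δ^{(n)}) ≤ (k+2)(n−1). -/
open MvPolynomial

variable (K : Type) [Field K] {N : ℕ}

section AuxLemmas

-- AUX
lemma prod_pow_mem_pow {R : Type*} [CommRing R] (P : Ideal R) (g : Fin N → R) (c : Fin N → ℕ)
    (T : Finset (Fin N)) (hg : ∀ i ∈ T, g i ∈ P) :
    (∏ i ∈ T, g i ^ c i) ∈ P ^ (∑ i ∈ T, c i) := by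
  classical
  induction T using Finset.induction_on with
  | empty => simp [Ideal.one_eq_top]
  | @insert a s ha ih =>
    rw [Finset.prod_insert ha, Finset.sum_insert ha, pow_add]
    exact Ideal.mul_mem_mul (Ideal.pow_mem_pow (hg a (Finset.mem_insert_self a s)) _)
      (ih fun i hi => hg i (Finset.mem_insert_of_mem hi))

lemma monomial_mem_symbolic (Δ : Set (Finset (Fin N))) (k n : ℕ)
    (hdim : ∀ G ∈ Δ, G.card ≤ k + 1) (F' : Finset (Fin N)) (hF' : F'.card = k + 1)
    (c : Fin N → ℕ) (hc : n ≤ ∑ i ∈ F'ᶜ, c i) (hbig : ∀ i ∈ F', n ≤ c i) :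
    (∏ i, (X i : MvPolynomial (Fin N) K) ^ c i) ∈ symbolicPowerSR K Δ n := by
  classical
  rw [symbolicPowerSR]
  simp only [Ideal.mem_iInf]
  intro F'' hF''
  have hsum : n ≤ ∑ i ∈ F''ᶜ, c i := by
    by_cases hsub : F' ⊆ F''
    · have : F' = F'' := Finset.eq_of_subset_of_card_le hsub (by
        rw [hF']; exact hdim F'' hF''.1)
      rw [← this]; exact hc
    · obtain ⟨j, hjF', hjF''⟩ := Finset.not_subset.mp hsub
      calc n ≤ c j := hbig j hjF'
        _ ≤ ∑ i ∈ F''ᶜ, c i :=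
          Finset.single_le_sum (fun i _ => Nat.zero_le _) (Finset.mem_compl.mpr hjF'')
  have h1 : (∏ i ∈ F''ᶜ, (X i : MvPolynomial (Fin N) K) ^ c i) ∈ (facePrime K F'') ^ n := by
    refine SetLike.le_def.mp (Ideal.pow_le_pow_right hsum) ?_
    exact prod_pow_mem_pow _ _ _ _ (fun i hi =>
      Ideal.subset_span ⟨i, Finset.mem_compl.mp hi, rfl⟩)
  rw [← Finset.prod_mul_prod_compl F''ᶜ (fun i => (X i : MvPolynomial (Fin N) K) ^ c i)]
  exact Ideal.mul_mem_right _ _ h1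

lemma xPow_mem_map_s18 (Δ : Set (Finset (Fin N))) (k n : ℕ)
    (hdim : ∀ G ∈ Δ, G.card ≤ k + 1) (α : Fin N → ℤ) (F' : Finset (Fin N))
    (hG : negSupp α ⊆ F') (hF' : F'.card = k + 1)
    (hsum : n ≤ ∑ i ∈ F'ᶜ, (α i).toNat) :
    xPow K α F' hG ∈ Ideal.map (algebraMap (MvPolynomial (Fin N) K)
      (Localization (varMonoid K F'))) (symbolicPowerSR K Δ n) := by
  classical
  set P : MvPolynomial (Fin N) K := ∏ i, X i ^ (α i).toNat with hP
  set t : MvPolynomial (Fin N) K := ∏ i ∈ F', X i ^ n with ht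
  have htmem : t ∈ varMonoid K F' :=
    Submonoid.prod_mem _ (fun i hi =>
      pow_mem (Submonoid.subset_closure (Set.mem_image_of_mem _ (Finset.mem_coe.mpr hi))) _)
  have hPt : P * t ∈ symbolicPowerSR K Δ n := by
    have heq : P * t = ∏ i, (X i : MvPolynomial (Fin N) K) ^ ((α i).toNat + if i ∈ F' then n else 0) := by
      simp only [pow_add, Finset.prod_mul_distrib, hP, ht]
      congr 1
      have h2 : (∏ x, (X x : MvPolynomial (Fin N) K) ^ (if x ∈ F' then n else 0)) =
          ∏ i ∈ F', X i ^ n := by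
        rw [Finset.prod_congr rfl (fun i (_ : i ∈ Finset.univ) =>
            show (X i : MvPolynomial (Fin N) K) ^ (if i ∈ F' then n else 0) =
              if i ∈ F' then X i ^ n else 1 from by split <;> simp),
          Finset.prod_ite_mem, Finset.univ_inter]
      exact h2.symm
    rw [heq]
    refine monomial_mem_symbolic K Δ k n hdim F' hF' _ ?_ ?_
    · refine le_trans hsum (Finset.sum_le_sum (fun i _ => Nat.le_add_right _ _))
    · intro i hi; simp [hi]
  set s : varMonoid K F' := (⟨∏ i ∈ negSupp α, X i ^ (-(α i)).toNat,
    Submonoid.prod_mem _ (fun i hi =>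
      pow_mem (Submonoid.subset_closure
        (Set.mem_image_of_mem _ (Finset.mem_coe.mpr (hG hi)))) _)⟩ : varMonoid K F') with hs
  have key : xPow K α F' hG =
      algebraMap (MvPolynomial (Fin N) K) (Localization (varMonoid K F')) (P * t) *
        IsLocalization.mk' (Localization (varMonoid K F')) (1 : MvPolynomial (Fin N) K)
          (s * ⟨t, htmem⟩) := by
    rw [xPow, ← IsLocalization.mk'_eq_mul_mk'_one, ← IsLocalization.mk'_eq_mul_mk'_one]
    have : (P * t) = P * t := rfl
    rw [show (s * ⟨t, htmem⟩ : varMonoid K F') = (⟨s.1 * t, mul_mem s.2 htmem⟩ : varMonoid K F') from rfl]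
    have := IsLocalization.mk'_cancel (S := Localization (varMonoid K F')) P s ⟨t, htmem⟩
    rw [← this]
    rfl
  rw [key]
  exact Ideal.mul_mem_right _ _ (Ideal.mem_map_of_mem _ hPt)

-- AUX2
lemma varMonoid_mono {W₁ W₂ : Finset (Fin N)} (h : W₁ ⊆ W₂) :
    varMonoid K W₁ ≤ varMonoid K W₂ :=
  Submonoid.closure_mono (Set.image_mono (Finset.coe_subset.mpr h))

lemma degreeComplex_downClosed (I : Ideal (MvPolynomial (Fin N) K)) (α : Fin N → ℤ) :
    DownClosed (degreeComplex K I α) := by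
  intro F hF G hGF
  obtain ⟨hdisj, hmem⟩ := hF
  refine ⟨hdisj.mono_left hGF, ?_⟩
  intro hGmem
  apply hmem
  have hsub : G ∪ negSupp α ⊆ F ∪ negSupp α := Finset.union_subset_union_left hGF
  have hle : varMonoid K (G ∪ negSupp α) ≤
      (varMonoid K (F ∪ negSupp α)).comap (RingHom.id (MvPolynomial (Fin N) K)) :=
    varMonoid_mono K hsub
  set φ := IsLocalization.map (M := varMonoid K (G ∪ negSupp α))
      (S := Localization (varMonoid K (G ∪ negSupp α)))
      (Localization (varMonoid K (F ∪ negSupp α)))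
      (RingHom.id (MvPolynomial (Fin N) K)) hle with hφ
  have hx : φ (xPow K α (G ∪ negSupp α) Finset.subset_union_right) =
      xPow K α (F ∪ negSupp α) Finset.subset_union_right := by
    rw [xPow, xPow, map_mul, IsLocalization.map_eq, IsLocalization.map_mk']
    rfl
  have himg := Ideal.mem_map_of_mem φ hGmem
  rw [Ideal.map_map, IsLocalization.map_comp, RingHom.comp_id, hx] at himg
  exact himg

open Classical in
lemma cycle_neighbor (Δ' : Set (Finset (Fin N))) (hdc : DownClosed Δ') (m : ℕ)
    (z : chainModule K Δ' (m + 1)) (hz : bdry K Δ' m z = 0)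
    (F : {F : Finset (Fin N) // F ∈ Δ' ∧ F.card = m + 1}) (hF : F ∈ z.support)
    (i : Fin N) (hi : i ∈ F.1) :
    ∃ G ∈ z.support, G.1 ≠ F.1 ∧ F.1.erase i ⊆ G.1 := by
  by_contra hcon
  push_neg at hcon
  have he : F.1.erase i ∈ Δ' := hdc F.1 F.2.1 _ (Finset.erase_subset i F.1)
  have hcard : (F.1.erase i).card = m := by
    simp [Finset.card_erase_of_mem hi, F.2.2]
  set b : {G : Finset (Fin N) // G ∈ Δ' ∧ G.card = m} := ⟨F.1.erase i, he, hcard⟩ with hb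
  have h0 : (bdry K Δ' m z) b = 0 := by rw [hz]; rfl
  rw [bdry, Finsupp.lsum_apply] at h0
  rw [Finsupp.sum_apply] at h0
  rw [Finsupp.sum] at h0
  simp only [LinearMap.sum_apply, LinearMap.smul_apply, Finsupp.finset_sum_apply,
    Finsupp.smul_apply] at h0
  classical
  have hzF : z F ≠ 0 := Finsupp.mem_support_iff.mp hF
  have hterm : ∀ G ∈ z.support, ∀ j ∈ G.1.attach,
      ((-1 : K) ^ (G.1.filter (fun l => l < j.1)).card •
        ((if h : (G.1.erase j.1) ∈ Δ' then
          Finsupp.lsingle (R := K) (⟨G.1.erase j.1, h, by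
            simp [Finset.card_erase_of_mem j.2, G.2.2]⟩ :
              {H : Finset (Fin N) // H ∈ Δ' ∧ H.card = m})
        else 0) (z G)) b) =
      (if G = F ∧ j.1 = i then
        ((-1 : K) ^ (G.1.filter (fun l => l < j.1)).card) * z G else 0) := by
    intro G hG j _
    by_cases hj : (G.1.erase j.1) ∈ Δ'
    · rw [dif_pos hj, Finsupp.lsingle_apply, Finsupp.single_apply]
      by_cases hGF : G = F ∧ j.1 = i
      · obtain ⟨hGF1, hGF2⟩ := hGF
        subst hGF1; subst hGF2
        rw [if_pos (by exact Subtype.ext rfl), if_pos ⟨rfl, rfl⟩, smul_eq_mul]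
      · rw [if_neg, if_neg hGF, smul_zero]
        intro heq
        have hval : G.1.erase j.1 = F.1.erase i := congrArg Subtype.val heq
        have hsub2 : F.1.erase i ⊆ G.1 := hval ▸ Finset.erase_subset _ _
        have hG1F1 : G.1 = F.1 := by
          by_contra hne
          exact (hcon G hG) hne hsub2
        have hGFeq : G = F := Subtype.ext hG1F1
        apply hGF
        refine ⟨hGFeq, ?_⟩
        subst hGFeq
        exact (Finset.erase_inj G.1 j.2).mp hval
    · rw [dif_neg hj, if_neg, LinearMap.zero_apply, Finsupp.coe_zero, Pi.zero_apply, smul_zero]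
      rintro ⟨hGF1, hGF2⟩
      subst hGF1; subst hGF2
      exact hj he
  have hkey : ∑ G ∈ z.support, ∑ j ∈ G.1.attach,
      (if G = F ∧ j.1 = i then
        ((-1 : K) ^ (G.1.filter (fun l => l < j.1)).card) * z G else 0)
      = ((-1 : K) ^ (F.1.filter (fun l => l < i)).card) * z F := by
    rw [Finset.sum_eq_single_of_mem F hF (fun G _ hG =>
      Finset.sum_eq_zero (fun j _ => if_neg (fun hc => hG hc.1)))]
    rw [Finset.sum_eq_single_of_mem (⟨i, hi⟩ : {x // x ∈ F.1}) (Finset.mem_attach _ _)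
      (fun j _ hj => if_neg (fun hc => hj (Subtype.ext hc.2)))]
    simp
  have h0' : ((-1 : K) ^ (F.1.filter (fun l => l < i)).card) * z F = 0 := by
    rw [← hkey]
    refine Eq.trans ?_ h0
    exact (Finset.sum_congr rfl (fun G hG => Finset.sum_congr rfl
      (fun j hj => (hterm G hG j hj).symm)))
  exact (mul_ne_zero (pow_ne_zero _ (neg_ne_zero.mpr (one_ne_zero))) hzF) h0'

end AuxLemmas

/-- Let `Δ` be a `k`-dimensional simplicial complex on `[s]`, `I_Δ` its
Stanley–Reisner ideal in `S = K[x₁,…,x_s]`. Then for every positive integer `n`,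
`a_{k+1}(S/I_Δ^{(n)}) ≤ (k+2)(n−1)`; indeed every degree in which
`H^{k+1}_m(S/I_Δ^{(n)})` is nonzero is at most `(k+2)(n−1)`. -/
theorem aInvariant_symbolicPower_le
    (Δ : Set (Finset (Fin N))) (hΔ : DownClosed Δ) (k : ℕ)
    (hdim : ∀ G ∈ Δ, G.card ≤ k + 1) (hex : ∃ G ∈ Δ, G.card = k + 1)
    (n : ℕ) (hn : 1 ≤ n) :
    (∀ t ∈ localCohNonzeroDegrees K (k + 1) (symbolicPowerSR K Δ n),
        t ≤ (k + 2) * ((n : ℤ) - 1)) ∧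
      aInvariant K (k + 1) (symbolicPowerSR K Δ n) ≤ (k + 2) * ((n : ℤ) - 1) := by
  
  classical
  have hn1 : (0:ℤ) ≤ (n:ℤ) - 1 := by
    have : (1:ℤ) ≤ (n:ℤ) := by exact_mod_cast hn
    omega
  have hbound0 : (0:ℤ) ≤ ((k:ℤ) + 2) * ((n : ℤ) - 1) := mul_nonneg (by positivity) hn1
  have main : ∀ t ∈ localCohNonzeroDegrees K (k + 1) (symbolicPowerSR K Δ n),
      t ≤ ((k:ℤ) + 2) * ((n : ℤ) - 1) := by
    rintro t ⟨α, hsumt, hcx, m, hm, hnt⟩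
    set I := symbolicPowerSR K Δ n with hI
    set Δα := degreeComplex K I α with hΔα
    have hcard_eq : m + (negSupp α).card = k + 1 := by
      have hc := hm
      push_cast at hc
      omega
    have hB : ∀ F : Finset (Fin N), F ∈ Δα → F.card = m →
        ∑ i ∈ (F ∪ negSupp α)ᶜ, α i ≤ (n:ℤ) - 1 := by
      intro F hFmem hFcard
      obtain ⟨hdisj, hnotmem⟩ := hFmem
      by_contra hgt
      push_neg at hgt
      apply hnotmem
      have hcardF' : (F ∪ negSupp α).card = k + 1 := by
        rw [Finset.card_union_of_disjoint hdisj, hFcard]; exact hcard_eq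
      have hnonneg : ∀ i ∈ (F ∪ negSupp α)ᶜ, 0 ≤ α i := by
        intro i hi
        have h1 : i ∉ negSupp α := fun h => (Finset.mem_compl.mp hi) (Finset.mem_union_right _ h)
        simp only [negSupp, Finset.mem_filter, Finset.mem_univ, true_and] at h1
        omega
      have hsn : n ≤ ∑ i ∈ (F ∪ negSupp α)ᶜ, (α i).toNat := by
        have h1 : (n:ℤ) ≤ ∑ i ∈ (F ∪ negSupp α)ᶜ, α i := by omega
        have h2 : ∑ i ∈ (F ∪ negSupp α)ᶜ, α i =
            ((∑ i ∈ (F ∪ negSupp α)ᶜ, (α i).toNat : ℕ) : ℤ) := by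
          push_cast
          exact Finset.sum_congr rfl (fun i hi => (Int.toNat_of_nonneg (hnonneg i hi)).symm)
        rw [h2] at h1
        exact_mod_cast h1
      exact xPow_mem_map_s18 K Δ k n hdim α (F ∪ negSupp α) Finset.subset_union_right hcardF' hsn
    -- extract a nonzero cycle
    letI : HasQuotient (↥(LinearMap.ker (bdryFrom K Δα m)))
        (Submodule K ↥(LinearMap.ker (bdryFrom K Δα m))) :=
          Submodule.hasQuotient (R := K) (M := LinearMap.ker (bdryFrom K Δα m))
    have hnt' : Nontrivial (LinearMap.ker (bdryFrom K Δα m) ⧸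
        Submodule.comap (LinearMap.ker (bdryFrom K Δα m)).subtype
          (LinearMap.range (bdry K Δα m))) := hnt
    have hns : ∃ y : LinearMap.ker (bdryFrom K Δα m),
        y.1 ∉ LinearMap.range (bdry K Δα m) := by
      by_contra hcon
      push_neg at hcon
      have htop : Submodule.comap (LinearMap.ker (bdryFrom K Δα m)).subtype
          (LinearMap.range (bdry K Δα m)) = ⊤ :=
        Submodule.eq_top_iff'.mpr (fun y => hcon y)
      have hss : Subsingleton (LinearMap.ker (bdryFrom K Δα m) ⧸
          Submodule.comap (LinearMap.ker (bdryFrom K Δα m)).subtype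
            (LinearMap.range (bdry K Δα m))) :=
        Submodule.Quotient.subsingleton_iff.mpr htop
      exact absurd hss (by haveI := hnt'; exact not_subsingleton _)
    obtain ⟨y, hy⟩ := hns
    have hyne : y.1 ≠ 0 := fun h => hy (h ▸ (LinearMap.range (bdry K Δα m)).zero_mem)
    obtain ⟨F₀, hF₀⟩ := Finsupp.support_nonempty_iff.mpr hyne
    have hC : ∀ i ∈ F₀.1, α i ≤ (n:ℤ) - 1 := by
      intro i hiF
      cases m with
      | zero =>
        exact absurd hiF (by simp [Finset.card_eq_zero.mp F₀.2.2])
      | succ m' =>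
        have hz : bdry K Δα m' y.1 = 0 := y.2
        obtain ⟨G, hGsupp, hGne, hGsub⟩ := cycle_neighbor K Δα
          (degreeComplex_downClosed K I α) m' y.1 hz F₀ hF₀ i hiF
        have hiG : i ∉ G.1 := by
          intro hiG
          have hsub : F₀.1 ⊆ G.1 := by
            intro x hx
            by_cases hxi : x = i
            · subst hxi; exact hiG
            · exact hGsub (Finset.mem_erase.mpr ⟨hxi, hx⟩)
          exact hGne ((Finset.eq_of_subset_of_card_le hsub (by rw [G.2.2, F₀.2.2])).symm)
        have hiGα : i ∉ negSupp α := Finset.disjoint_left.mp F₀.2.1.1 hiF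
        have hin : i ∈ (G.1 ∪ negSupp α)ᶜ :=
          Finset.mem_compl.mpr (by simp [Finset.mem_union, hiG, hiGα])
        have hnonneg : ∀ l ∈ (G.1 ∪ negSupp α)ᶜ, 0 ≤ α l := by
          intro l hl
          have h1 : l ∉ negSupp α := fun h => (Finset.mem_compl.mp hl) (Finset.mem_union_right _ h)
          simp only [negSupp, Finset.mem_filter, Finset.mem_univ, true_and] at h1
          omega
        calc α i ≤ ∑ l ∈ (G.1 ∪ negSupp α)ᶜ, α l := Finset.single_le_sum hnonneg hin
          _ ≤ (n:ℤ) - 1 := hB G.1 G.2.1 G.2.2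
    have hd : Disjoint F₀.1 (negSupp α) := F₀.2.1.1
    have hsplit : ∑ j, α j = ∑ j ∈ (F₀.1 ∪ negSupp α), α j +
        ∑ j ∈ (F₀.1 ∪ negSupp α)ᶜ, α j := (Finset.sum_add_sum_compl _ _).symm
    have h1 : ∑ j ∈ F₀.1 ∪ negSupp α, α j = ∑ j ∈ F₀.1, α j + ∑ j ∈ negSupp α, α j :=
      Finset.sum_union hd
    have h2 : ∑ j ∈ F₀.1, α j ≤ (F₀.1.card : ℤ) * ((n:ℤ) - 1) := by
      have := Finset.sum_le_card_nsmul F₀.1 α ((n:ℤ) - 1) (fun i hi => hC i hi)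
      simpa [nsmul_eq_mul] using this
    have h3 : ∑ j ∈ negSupp α, α j ≤ 0 := Finset.sum_nonpos (fun j hj => le_of_lt (by
      simp only [negSupp, Finset.mem_filter, Finset.mem_univ, true_and] at hj; exact hj))
    have h4 : ∑ j ∈ (F₀.1 ∪ negSupp α)ᶜ, α j ≤ (n:ℤ) - 1 := hB F₀.1 F₀.2.1 F₀.2.2
    have hcard : (F₀.1.card : ℤ) = (m : ℤ) := by exact_mod_cast F₀.2.2
    have hmk : (m:ℤ) ≤ (k:ℤ) + 1 := by
      have := hcard_eq; push_cast; omega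
    have hmul : (m:ℤ) * ((n:ℤ) - 1) ≤ ((k:ℤ) + 1) * ((n:ℤ) - 1) :=
      mul_le_mul_of_nonneg_right hmk hn1
    rw [← hsumt]
    nlinarith [hsplit, h1, h2, h3, h4, hcard, hmul]
  refine ⟨by exact_mod_cast main, ?_⟩
  rw [aInvariant]
  rcases Set.eq_empty_or_nonempty (localCohNonzeroDegrees K (k + 1) (symbolicPowerSR K Δ n))
    with he | hne
  · rw [he, Int.csSup_empty]
    exact_mod_cast hbound0
  · refine le_trans (csSup_le hne main) (by push_cast; omega)
end
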